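/- arXiv:2101.01953 — 10 statements merged into one kernel-verified Lean document; each statement's English description precedes it below -/
import Mathlib

section
/- There exist a constant c > 0 and an integer n₀ such that for every n ≥ n₀, every balanced rectangle cover of the pseudo-Boolean constraint f_n has size at least 2^(c·n); that is, C(f_n) ≥ 2^(c·n). -/
/-- `g` depends only on the variables in `S`. -/
def DependsOnlyOn {X : Type*} (S : Finset X) (g : (X → Bool) → Bool) : Prop :=
  ∀ x y : X → Bool, (∀ v ∈ S, x v = y v) → g x = g y

/-- `r` is a rectangle with respect to the partition `(X1, X2)` of the variable set. -/
def IsRectangle {X : Type*} [Fintype X] [DecidableEq X] (X1 X2 : Finset X)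
    (r : (X → Bool) → Bool) : Prop :=
  X1 ∪ X2 = Finset.univ ∧ X1 ∩ X2 = ∅ ∧
    ∃ ρ1 ρ2 : (X → Bool) → Bool, DependsOnlyOn X1 ρ1 ∧ DependsOnlyOn X2 ρ2 ∧
      ∀ x, r x = (ρ1 x && ρ2 x)

/-- `r` is a rectangle with respect to some balanced partition. -/
def IsBalancedRectangle {X : Type*} [Fintype X] [DecidableEq X]
    (r : (X → Bool) → Bool) : Prop :=
  ∃ X1 X2 : Finset X, IsRectangle X1 X2 r ∧
    Fintype.card X ≤ 3 * X1.card ∧ 3 * X1.card ≤ 2 * Fintype.card X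

/-- A balanced rectangle cover of `f`: a finite list of balanced rectangles whose
disjunction is equivalent to `f`. -/
def IsBalancedRectangleCover {X : Type*} [Fintype X] [DecidableEq X]
    (L : List ((X → Bool) → Bool)) (f : (X → Bool) → Bool) : Prop :=
  (∀ r ∈ L, IsBalancedRectangle r) ∧
    ∀ x, f x = true ↔ ∃ r ∈ L, r x = true

/-- The weight of an assignment to the `n × n` grid of variables, where variable `(i,j)`
(`0`-indexed) has weight `2 ^ i + 2 ^ (n + j)`. -/
def pbWeight (n : ℕ) (x : Fin n × Fin n → Bool) : ℕ :=
  ∑ p : Fin n × Fin n, if x p = true then 2 ^ (p.1 : ℕ) + 2 ^ (n + (p.2 : ℕ)) else 0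

/-- The pseudo-Boolean constraint `f_n`. -/
def fPB (n : ℕ) (x : Fin n × Fin n → Bool) : Bool :=
  decide (2 ^ (2 * n) - 1 ≤ pbWeight n x)


open Finset

open Finset

lemma two_pow_sum (m : ℕ) : (∑ l ∈ Finset.range m, 2^l) = 2^m - 1 := by
  induction m with
  | zero => simp
  | succ m ih =>
    rw [Finset.sum_range_succ, ih]
    have : 1 ≤ 2^m := Nat.one_le_two_pow
    have : 2^(m+1) = 2 * 2^m := by ring
    omega

/-- digits in {0,1,2} summing to 2^m - 1 must all be 1 -/
lemma digit_lemma : ∀ (m : ℕ) (d : ℕ → ℕ), (∀ l, l < m → d l ≤ 2) →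
    (∑ l ∈ Finset.range m, d l * 2^l) = 2^m - 1 → ∀ l, l < m → d l = 1 := by
  intro m
  induction m with
  | zero => intro d _ _ l hl; omega
  | succ m ih =>
    intro d hd hsum l hl
    rw [Finset.sum_range_succ] at hsum
    have hbound : (∑ l ∈ Finset.range m, d l * 2^l) ≤ 2 * (2^m - 1) := by
      calc (∑ l ∈ Finset.range m, d l * 2^l) ≤ ∑ l ∈ Finset.range m, 2 * 2^l := by
            apply Finset.sum_le_sum; intro i hi
            exact Nat.mul_le_mul_right _ (hd i (by simpa using Nat.lt_succ_of_lt (Finset.mem_range.mp hi)))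
        _ = 2 * (2^m - 1) := by rw [← Finset.mul_sum, two_pow_sum]
    have h1 : 1 ≤ 2^m := Nat.one_le_two_pow
    have h2 : 2^(m+1) = 2 * 2^m := by ring
    have hdm : d m ≤ 2 := hd m (Nat.lt_succ_self m)
    have hdm1 : d m = 1 := by
      interval_cases h : d m <;> omega
    have hrest : (∑ l ∈ Finset.range m, d l * 2^l) = 2^m - 1 := by
      rw [hdm1] at hsum; omega
    rcases Nat.lt_succ_iff_lt_or_eq.mp hl with h | h
    · exact ih d (fun l hl => hd l (Nat.lt_succ_of_lt hl)) hrest l h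
    · rw [h]; exact hdm1

lemma pow_add_bound (a h : ℕ) : ∀ q, a^(q+1) + (q+1)*(h*a^q) ≤ (a+h)^(q+1) := by
  intro q
  induction q with
  | zero => simpa using by ring_nf; omega
  | succ q ih =>
    have : (a+h)^(q+2) = (a+h)^(q+1) * (a+h) := by ring
    rw [this]
    calc a^(q+2) + (q+2)*(h*a^(q+1))
        ≤ (a^(q+1) + (q+1)*(h*a^q)) * (a+h) := by
          have expand : (a^(q+1) + (q+1)*(h*a^q)) * (a+h)
              = a^(q+2) + h*a^(q+1) + (q+1)*(h*a^(q+1)) + (q+1)*(h*(h*a^q)) := by ring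
          rw [expand]
          have : (q+2)*(h*a^(q+1)) = h*a^(q+1) + (q+1)*(h*a^(q+1)) := by ring
          omega
      _ ≤ (a+h)^(q+1) * (a+h) := Nat.mul_le_mul_right _ ih

lemma two_mul_pow_le (a h : ℕ) (hq : a ≤ 130 * h) : 2 * a^130 ≤ (a+h)^130 := by
  have := pow_add_bound a h 129
  have h1 : a^130 ≤ 130*(h*a^129) := by
    calc a^130 = a * a^129 := by ring
      _ ≤ (130*h) * a^129 := Nat.mul_le_mul_right _ hq
      _ = 130*(h*a^129) := by ring
  calc 2 * a^130 = a^130 + a^130 := by ring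
    _ ≤ a^130 + 130*(h*a^129) := by omega
    _ = a^(129+1) + (129+1)*(h*a^129) := by norm_num
    _ ≤ (a+h)^130 := this

lemma fact_prod (a : ℕ) : ∀ b, a.factorial * ∏ l ∈ Finset.range b, (a + l + 1) = (a + b).factorial := by
  intro b
  induction b with
  | zero => simp
  | succ b ih =>
    rw [Finset.prod_range_succ, ← Nat.mul_assoc, ih]
    have : a + (b+1) = (a + b) + 1 := by ring
    rw [this, Nat.factorial_succ]
    ring

/-- the key arithmetic estimate -/
lemma key_arith (n : ℕ) (hn : 1000000 ≤ n) :
    (n - n/64)^(n/64) * (n - n/64).factorial * 2^((n/64 - (n/64)/2)/130) ≤ n.factorial := by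
  set s := n/64 with hs
  set a := n - s with ha
  set h := s/2 with hh
  set K := (s - h)/130 with hK
  have hsn : s ≤ n := Nat.div_le_self n 64
  have hab : a + s = n := by omega
  -- n! = a! * prod
  have hfact : a.factorial * ∏ l ∈ Finset.range s, (a + l + 1) = n.factorial := by
    rw [fact_prod a s, hab]
  -- lower bound prod
  have hprod1 : a^h * (a+h)^(s-h) ≤ ∏ l ∈ Finset.range s, (a + l + 1) := by
    have hsplit : (∏ l ∈ Finset.Ico 0 h, (a+l+1)) * ∏ l ∈ Finset.Ico h s, (a+l+1)
        = ∏ l ∈ Finset.Ico 0 s, (a+l+1) :=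
      Finset.prod_Ico_consecutive _ (Nat.zero_le h) (by omega)
    have h1 : a^h ≤ ∏ l ∈ Finset.Ico 0 h, (a+l+1) := by
      calc a^h = ∏ _l ∈ Finset.Ico 0 h, a := by rw [Finset.prod_const]; simp
        _ ≤ _ := Finset.prod_le_prod' (fun i _ => by omega)
    have h2 : (a+h)^(s-h) ≤ ∏ l ∈ Finset.Ico h s, (a+l+1) := by
      calc (a+h)^(s-h) = ∏ _l ∈ Finset.Ico h s, (a+h) := by
            rw [Finset.prod_const, Nat.card_Ico]
        _ ≤ _ := Finset.prod_le_prod' (fun i hi => by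
            have := (Finset.mem_Ico.mp hi).1; omega)
    calc a^h * (a+h)^(s-h) ≤ (∏ l ∈ Finset.Ico 0 h, (a+l+1)) * ∏ l ∈ Finset.Ico h s, (a+l+1) :=
          Nat.mul_le_mul h1 h2
      _ = _ := by rw [hsplit, ← Finset.range_eq_Ico]
  -- (a+h)^(s-h) ≥ 2^K * a^(s-h)
  have hq : a ≤ 130 * h := by omega
  have hpow : 2^K * a^(s-h) ≤ (a+h)^(s-h) := by
    have hdecomp : s - h = 130 * K + ((s-h) % 130) := by
      rw [hK]; exact (Nat.div_add_mod (s-h) 130).symm ▸ by omega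
    rw [hdecomp]
    calc 2^K * a^(130*K + (s-h)%130) = (2*a^130)^K * a^((s-h)%130) := by
          rw [mul_pow, ← pow_mul]; ring
      _ ≤ ((a+h)^130)^K * a^((s-h)%130) :=
          Nat.mul_le_mul_right _ (Nat.pow_le_pow_left (two_mul_pow_le a h hq) K)
      _ ≤ ((a+h)^130)^K * (a+h)^((s-h)%130) := by
          apply Nat.mul_le_mul_left
          exact Nat.pow_le_pow_left (by omega) _
      _ = (a+h)^(130*K + (s-h)%130) := by rw [← pow_mul, ← pow_add]
  -- combine
  have hmain : a^s * 2^K ≤ ∏ l ∈ Finset.range s, (a + l + 1) := by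
    have hhs : h + (s - h) = s := by omega
    have hps : a^h * a^(s-h) = a^s := by rw [← pow_add, hhs]
    calc a^s * 2^K = a^h * (2^K * a^(s-h)) := by rw [← hps]; ring
      _ ≤ a^h * (a+h)^(s-h) := Nat.mul_le_mul_left _ hpow
      _ ≤ _ := hprod1
  calc a^s * a.factorial * 2^K = a.factorial * (a^s * 2^K) := by ring
    _ ≤ a.factorial * ∏ l ∈ Finset.range s, (a + l + 1) := Nat.mul_le_mul_left _ hmain
    _ = n.factorial := hfact


section defs
variable {n : ℕ}

def xMat (σ : Equiv.Perm (Fin n)) : Fin n × Fin n → Bool := fun p => decide (p.2 = σ p.1)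

def mixA (X1 : Finset (Fin n × Fin n)) (x y : Fin n × Fin n → Bool) : Fin n × Fin n → Bool :=
  fun p => if p ∈ X1 then x p else y p

lemma pbWeight_rowcol (n : ℕ) (z : Fin n × Fin n → Bool) :
    pbWeight n z = (∑ i : Fin n, (univ.filter fun j => z (i,j) = true).card * 2^(i:ℕ))
      + ∑ j : Fin n, (univ.filter fun i => z (i,j) = true).card * 2^(n + (j:ℕ)) := by
  unfold pbWeight
  have hsplit : ∀ p : Fin n × Fin n,
      (if z p = true then 2 ^ (p.1 : ℕ) + 2 ^ (n + (p.2 : ℕ)) else 0)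
      = (if z p = true then 2 ^ (p.1 : ℕ) else 0) + (if z p = true then 2 ^ (n + (p.2:ℕ)) else 0) := by
    intro p; split <;> simp
  rw [Finset.sum_congr rfl (fun p _ => hsplit p), Finset.sum_add_distrib]
  congr 1
  · rw [Fintype.sum_prod_type]
    apply Finset.sum_congr rfl
    intro i _
    have h : (∑ j : Fin n, if z (i,j) = true then 2^(i:ℕ) else 0)
        = (univ.filter fun j => z (i,j) = true).card * 2^(i:ℕ) := by
      rw [← Finset.sum_filter, Finset.sum_const, smul_eq_mul]
    exact h
  · rw [Fintype.sum_prod_type_right]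
    apply Finset.sum_congr rfl
    intro j _
    have h : (∑ i : Fin n, if z (i,j) = true then 2^(n + (j:ℕ)) else 0)
        = (univ.filter fun i => z (i,j) = true).card * 2^(n + (j:ℕ)) := by
      rw [← Finset.sum_filter, Finset.sum_const, smul_eq_mul]
    exact h

lemma pbWeight_perm (σ : Equiv.Perm (Fin n)) : pbWeight n (xMat σ) = 2^(2*n) - 1 := by
  rw [pbWeight_rowcol]
  have hrow : ∀ i : Fin n, (univ.filter fun j => xMat σ (i,j) = true) = {σ i} := by
    intro i; ext j; simp [xMat]
  have hcol : ∀ j : Fin n, (univ.filter fun i => xMat σ (i,j) = true) = {σ⁻¹ j} := by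
    intro j; ext i
    simp only [xMat, mem_filter, mem_univ, true_and, decide_eq_true_eq, mem_singleton]
    constructor
    · intro h; rw [h]; exact (Equiv.symm_apply_apply σ i).symm
    · intro h; rw [h]; exact (Equiv.apply_symm_apply σ j).symm
  have h1 : (∑ i : Fin n, (univ.filter fun j => xMat σ (i,j) = true).card * 2^(i:ℕ)) = 2^n - 1 := by
    rw [Finset.sum_congr rfl (fun i _ => by rw [hrow i, Finset.card_singleton, one_mul])]
    rw [Fin.sum_univ_eq_sum_range (fun l => 2^l) n, two_pow_sum]
  have h2 : (∑ j : Fin n, (univ.filter fun i => xMat σ (i,j) = true).card * 2^(n + (j:ℕ)))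
      = 2^n * (2^n - 1) := by
    rw [Finset.sum_congr rfl (fun j _ => by rw [hcol j, Finset.card_singleton, one_mul, pow_add])]
    rw [← Finset.mul_sum, Fin.sum_univ_eq_sum_range (fun l => 2^l) n, two_pow_sum]
  rw [h1, h2]
  have h3 : 1 ≤ 2^n := Nat.one_le_two_pow
  have h4 : 2^(2*n) = 2^n * 2^n := by rw [two_mul, pow_add]
  rw [h4]
  cases Nat.exists_eq_add_of_le h3 with
  | intro t ht =>
    have h5 : 1 + t - 1 = t := by omega
    rw [ht, h5]; ring_nf; omega

lemma card_two_cases {α : Type*} [DecidableEq α] [Fintype α] (u v : α) (c1 c2 : Prop)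
    [Decidable c1] [Decidable c2] (huv : u = v → (c1 ↔ ¬ c2)) :
    (univ.filter fun j => (j = u ∧ c1) ∨ (j = v ∧ c2)).card
      = (if c1 then 1 else 0) + (if c2 then 1 else 0) := by
  by_cases h1 : c1 <;> by_cases h2 : c2
  · have hne : u ≠ v := fun h => (huv h).mp h1 h2
    have : (univ.filter fun j => (j = u ∧ c1) ∨ (j = v ∧ c2)) = {u, v} := by
      ext j; simp [h1, h2]
    rw [this, Finset.card_pair hne, if_pos h1, if_pos h2]
  · have : (univ.filter fun j => (j = u ∧ c1) ∨ (j = v ∧ c2)) = {u} := by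
      ext j; simp [h1, h2]
    rw [this, Finset.card_singleton, if_pos h1, if_neg h2]
  · have : (univ.filter fun j => (j = u ∧ c1) ∨ (j = v ∧ c2)) = {v} := by
      ext j; simp [h1, h2]
    rw [this, Finset.card_singleton, if_neg h1, if_pos h2]
  · have : (univ.filter fun j => (j = u ∧ c1) ∨ (j = v ∧ c2)) = ∅ := by
      ext j; simp [h1, h2]
    rw [this, Finset.card_empty, if_neg h1, if_neg h2]

lemma mix_row (X1 : Finset (Fin n × Fin n)) (σ τ : Equiv.Perm (Fin n)) (i : Fin n) :
    (univ.filter fun j => mixA X1 (xMat σ) (xMat τ) (i,j) = true).card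
      = (if (i, σ i) ∈ X1 then 1 else 0) + (if (i, τ i) ∉ X1 then 1 else 0) := by
  rw [← card_two_cases (σ i) (τ i) ((i, σ i) ∈ X1) ((i, τ i) ∉ X1)
    (fun h => by rw [h]; simp)]
  congr 1
  apply Finset.filter_congr
  intro j _
  simp only [mixA, xMat]
  by_cases hj : (i,j) ∈ X1
  · rw [if_pos hj]
    simp only [decide_eq_true_eq]
    constructor
    · intro h; subst h; exact Or.inl ⟨rfl, hj⟩
    · rintro (⟨h,_⟩|⟨h,hc⟩)
      · exact h
      · subst h; exact absurd hj hc
  · rw [if_neg hj]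
    simp only [decide_eq_true_eq]
    constructor
    · intro h; subst h; exact Or.inr ⟨rfl, hj⟩
    · rintro (⟨h,hc⟩|⟨h,_⟩)
      · subst h; exact absurd hc hj
      · exact h

lemma mix_col (X1 : Finset (Fin n × Fin n)) (σ τ : Equiv.Perm (Fin n)) (j : Fin n) :
    (univ.filter fun i => mixA X1 (xMat σ) (xMat τ) (i,j) = true).card
      = (if (σ⁻¹ j, j) ∈ X1 then 1 else 0) + (if (τ⁻¹ j, j) ∉ X1 then 1 else 0) := by
  rw [← card_two_cases (σ⁻¹ j) (τ⁻¹ j) ((σ⁻¹ j, j) ∈ X1) ((τ⁻¹ j, j) ∉ X1)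
    (fun h => by rw [h]; simp)]
  congr 1
  apply Finset.filter_congr
  intro i _
  have e1 : ∀ (ρ : Equiv.Perm (Fin n)), j = ρ i ↔ i = ρ⁻¹ j := by
    intro ρ
    constructor
    · intro h; rw [h]; exact (Equiv.symm_apply_apply ρ i).symm
    · intro h; rw [h]; exact (Equiv.apply_symm_apply ρ j).symm
  simp only [mixA, xMat]
  by_cases hj : (i,j) ∈ X1
  · rw [if_pos hj]
    simp only [decide_eq_true_eq]
    rw [e1 σ]
    constructor
    · intro h; subst h; exact Or.inl ⟨rfl, hj⟩
    · rintro (⟨h,_⟩|⟨h,hc⟩)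
      · exact h
      · subst h; exact absurd hj hc
  · rw [if_neg hj]
    simp only [decide_eq_true_eq]
    rw [e1 τ]
    constructor
    · intro h; subst h; exact Or.inr ⟨rfl, hj⟩
    · rintro (⟨h,hc⟩|⟨h,_⟩)
      · subst h; exact absurd hc hj
      · exact h

/-- Fin-indexed digit uniqueness -/
lemma fin_digit (n : ℕ) (a b : Fin n → ℕ) (ha : ∀ i, a i ≤ 2) (hb : ∀ j, b j ≤ 2)
    (hsum : (∑ i : Fin n, a i * 2^(i:ℕ)) + ∑ j : Fin n, b j * 2^(n + (j:ℕ)) = 2^(2*n) - 1) :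
    (∀ i, a i = 1) ∧ (∀ j, b j = 1) := by
  set d : ℕ → ℕ := fun l => if h : l < n then a ⟨l, h⟩ else if h2 : l - n < n then b ⟨l - n, h2⟩ else 0
    with hd
  have hda : ∀ i : Fin n, d (i : ℕ) = a i := by
    intro i; rw [hd]; simp only [i.isLt, dif_pos, Fin.eta]
  have hdb : ∀ j : Fin n, d (n + (j : ℕ)) = b j := by
    intro j
    have h1 : ¬ (n + (j:ℕ) < n) := by omega
    have h2 : n + (j:ℕ) - n < n := by omega
    simp only [hd, dif_neg h1, dif_pos h2]
    congr 1
    exact Fin.ext (show n + (j:ℕ) - n = (j:ℕ) by omega)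
  have e1 : ∑ i : Fin n, d (i:ℕ) * 2^(i:ℕ) = ∑ i : Fin n, a i * 2^(i:ℕ) :=
    Finset.sum_congr rfl (fun i _ => by rw [hda i])
  have e2 : ∑ j : Fin n, d (n + (j:ℕ)) * 2^(n+(j:ℕ)) = ∑ j : Fin n, b j * 2^(n+(j:ℕ)) :=
    Finset.sum_congr rfl (fun j _ => by rw [hdb j])
  have hdsum : ∑ l ∈ Finset.range (2*n), d l * 2^l = 2^(2*n) - 1 := by
    calc ∑ l ∈ Finset.range (2*n), d l * 2^l
        = ∑ l ∈ Finset.range (n+n), d l * 2^l := by rw [two_mul]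
      _ = (∑ l ∈ Finset.range n, d l * 2^l) + ∑ l ∈ Finset.range n, d (n+l) * 2^(n+l) :=
          Finset.sum_range_add _ n n
      _ = (∑ i : Fin n, d (i:ℕ) * 2^(i:ℕ)) + ∑ j : Fin n, d (n+(j:ℕ)) * 2^(n+(j:ℕ)) := by
          rw [Fin.sum_univ_eq_sum_range (fun l => d l * 2^l) n,
             Fin.sum_univ_eq_sum_range (fun l => d (n+l) * 2^(n+l)) n]
      _ = 2^(2*n) - 1 := by rw [e1, e2]; exact hsum
  have hdle : ∀ l, l < 2*n → d l ≤ 2 := by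
    intro l _
    simp only [hd]
    split
    · apply ha
    · split
      · apply hb
      · omega
  have := digit_lemma (2*n) d hdle hdsum
  constructor
  · intro i
    rw [← hda i]; exact this _ (by omega)
  · intro j
    rw [← hdb j]; exact this _ (by omega)

lemma mix_weight_add (X1 : Finset (Fin n × Fin n)) (x y : Fin n × Fin n → Bool) :
    pbWeight n (mixA X1 x y) + pbWeight n (mixA X1 y x) = pbWeight n x + pbWeight n y := by
  unfold pbWeight
  rw [← Finset.sum_add_distrib, ← Finset.sum_add_distrib]
  apply Finset.sum_congr rfl
  intro p _
  simp only [mixA]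
  by_cases hp : p ∈ X1
  · simp only [if_pos hp]
    try exact Nat.add_comm _ _
  · simp only [if_neg hp]
    try exact Nat.add_comm _ _

end defs

section rectpart
variable {n : ℕ}

lemma mix_weight_eq (X1 X2 : Finset (Fin n × Fin n)) (ρ1 ρ2 r : (Fin n × Fin n → Bool) → Bool)
    (hu : X1 ∪ X2 = Finset.univ) (hd : X1 ∩ X2 = ∅)
    (hρ1 : DependsOnlyOn X1 ρ1) (hρ2 : DependsOnlyOn X2 ρ2)
    (hr : ∀ x, r x = (ρ1 x && ρ2 x))
    (hsub : ∀ x, r x = true → 2^(2*n) - 1 ≤ pbWeight n x)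
    (σ τ : Equiv.Perm (Fin n)) (hσ : r (xMat σ) = true) (hτ : r (xMat τ) = true) :
    pbWeight n (mixA X1 (xMat σ) (xMat τ)) = 2^(2*n) - 1 := by
  have hX2 : ∀ p : Fin n × Fin n, p ∈ X2 → p ∉ X1 := by
    intro p h2 h1
    have : p ∈ X1 ∩ X2 := Finset.mem_inter.mpr ⟨h1, h2⟩
    rw [hd] at this
    exact absurd this (Finset.notMem_empty p)
  have hmix : ∀ (x y : Fin n × Fin n → Bool), r x = true → r y = true →
      r (mixA X1 x y) = true := by
    intro x y hx hy
    rw [hr] at hx hy ⊢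
    rw [Bool.and_eq_true] at hx hy
    have e1 : ρ1 (mixA X1 x y) = ρ1 x := hρ1 _ _ (fun v hv => by simp [mixA, if_pos hv])
    have e2 : ρ2 (mixA X1 x y) = ρ2 y := hρ2 _ _ (fun v hv => by
      simp [mixA, if_neg (hX2 v hv)])
    rw [e1, e2, hx.1, hy.2]
    rfl
  have h1 : 2^(2*n) - 1 ≤ pbWeight n (mixA X1 (xMat σ) (xMat τ)) :=
    hsub _ (hmix _ _ hσ hτ)
  have h2 : 2^(2*n) - 1 ≤ pbWeight n (mixA X1 (xMat τ) (xMat σ)) :=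
    hsub _ (hmix _ _ hτ hσ)
  have h3 := mix_weight_add X1 (xMat σ) (xMat τ)
  rw [pbWeight_perm σ, pbWeight_perm τ] at h3
  omega

lemma mix_one (X1 X2 : Finset (Fin n × Fin n)) (ρ1 ρ2 r : (Fin n × Fin n → Bool) → Bool)
    (hu : X1 ∪ X2 = Finset.univ) (hd : X1 ∩ X2 = ∅)
    (hρ1 : DependsOnlyOn X1 ρ1) (hρ2 : DependsOnlyOn X2 ρ2)
    (hr : ∀ x, r x = (ρ1 x && ρ2 x))
    (hsub : ∀ x, r x = true → 2^(2*n) - 1 ≤ pbWeight n x)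
    (σ τ : Equiv.Perm (Fin n)) (hσ : r (xMat σ) = true) (hτ : r (xMat τ) = true) :
    (∀ i, ((i, σ i) ∈ X1 ↔ (i, τ i) ∈ X1)) ∧
      (∀ j, ((σ⁻¹ j, j) ∈ X1 ↔ (τ⁻¹ j, j) ∈ X1)) := by
  have hw := mix_weight_eq X1 X2 ρ1 ρ2 r hu hd hρ1 hρ2 hr hsub σ τ hσ hτ
  rw [pbWeight_rowcol] at hw
  set a : Fin n → ℕ :=
    fun i => (if (i, σ i) ∈ X1 then 1 else 0) + (if (i, τ i) ∉ X1 then 1 else 0) with ha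
  set b : Fin n → ℕ :=
    fun j => (if (σ⁻¹ j, j) ∈ X1 then 1 else 0) + (if (τ⁻¹ j, j) ∉ X1 then 1 else 0) with hb
  have hsum : (∑ i : Fin n, a i * 2^(i:ℕ)) + ∑ j : Fin n, b j * 2^(n + (j:ℕ))
      = 2^(2*n) - 1 := by
    rw [← hw]
    congr 1
    · exact Finset.sum_congr rfl (fun i _ => by rw [ha]; rw [mix_row X1 σ τ i])
    · exact Finset.sum_congr rfl (fun j _ => by rw [hb]; rw [mix_col X1 σ τ j])
  have hd1 := fin_digit n a b
    (fun i => by rw [ha]; dsimp only; split <;> split <;> omega)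
    (fun j => by rw [hb]; dsimp only; split <;> split <;> omega) hsum
  constructor
  · intro i
    have h1 := hd1.1 i
    rw [ha] at h1
    dsimp only at h1
    by_cases c1 : (i, σ i) ∈ X1 <;> by_cases c2 : (i, τ i) ∈ X1 <;>
      simp [c1, c2] at h1 ⊢
  · intro j
    have h1 := hd1.2 j
    rw [hb] at h1
    dsimp only at h1
    by_cases c1 : (σ⁻¹ j, j) ∈ X1 <;> by_cases c2 : (τ⁻¹ j, j) ∈ X1 <;>
      (simp only [Equiv.Perm.coe_inv] at c1 c2; simp [c1, c2] at h1 ⊢)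

/-- fiberwise card of a planar set -/
lemma card_block (S : Finset (Fin n × Fin n)) :
    S.card = ∑ i : Fin n, (Finset.univ.filter fun j => (i,j) ∈ S).card := by
  rw [Finset.card_eq_sum_card_fiberwise (f := Prod.fst) (t := Finset.univ)
    (fun p _ => Finset.mem_univ _)]
  apply Finset.sum_congr rfl
  intro i _
  apply Finset.card_bij (fun p _ => p.2)
  · intro p hp
    rw [Finset.mem_filter] at hp ⊢
    refine ⟨Finset.mem_univ _, ?_⟩
    have : p = (i, p.2) := Prod.ext hp.2 rfl
    rw [← this]; exact hp.1
  · intro p hp q hq hpq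
    rw [Finset.mem_filter] at hp hq
    exact Prod.ext (hp.2.trans hq.2.symm) hpq
  · intro j hj
    rw [Finset.mem_filter] at hj
    exact ⟨(i, j), Finset.mem_filter.mpr ⟨hj.2, rfl⟩, rfl⟩

end rectpart

lemma block_arith (n k m X1c e1 e2 : ℕ) (hn : 0 < n) (hkm : k + m = n)
    (hX1le : X1c ≤ k*n + k*m + e1)
    (hX1ge : k*n ≤ X1c + k*m + e2)
    (hbal1 : n*n ≤ 3*X1c) (hbal2 : 3*X1c ≤ 2*(n*n)) :
    n*n ≤ 32*((k*m + e2) + (k*m + e1)) := by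
  by_cases h1 : n*n ≤ 32*e1
  · omega
  by_cases h2 : n*n ≤ 32*e2
  · omega
  push_neg at h1 h2
  have hmn : k*m ≤ k*n := Nat.mul_le_mul_left k (by omega)
  have hkn : k*m ≤ n*m := Nat.mul_le_mul_right m (by omega)
  have hsplit : k*n + m*n = n*n := by rw [← Nat.add_mul, hkm]
  have step1 : 29*(n*n) ≤ 192*(k*n) := by omega
  have step2 : 29*(n*n) ≤ 192*(n*m) := by
    have hmn2 : n*m = m*n := Nat.mul_comm n m
    omega
  have s3a : 29*n ≤ 192*k := by
    have h : (29*n)*n ≤ (192*k)*n := by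
      calc (29*n)*n = 29*(n*n) := by ring
        _ ≤ 192*(k*n) := step1
        _ = (192*k)*n := by ring
    exact Nat.le_of_mul_le_mul_right h hn
  have s3b : 29*n ≤ 192*m := by
    have h : (29*n)*n ≤ (192*m)*n := by
      calc (29*n)*n = 29*(n*n) := by ring
        _ ≤ 192*(n*m) := step2
        _ = (192*m)*n := by ring
    exact Nat.le_of_mul_le_mul_right h hn
  have step4 : 576*(n*n) ≤ 576*(64*(k*m)) := by
    calc 576*(n*n) ≤ 841*(n*n) := by omega
      _ = (29*n)*(29*n) := by ring
      _ ≤ (192*k)*(192*m) := Nat.mul_le_mul s3a s3b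
      _ = 576*(64*(k*m)) := by ring
  have step5 : n*n ≤ 64*(k*m) := Nat.le_of_mul_le_mul_left step4 (by norm_num)
  omega

lemma stab_card {n : ℕ} (T : Finset (Fin n)) :
    (Finset.univ.filter fun ρ : Equiv.Perm (Fin n) => ∀ i ∈ T, ρ i = i).card
      ≤ (n - T.card).factorial := by
  classical
  have hfun : ∀ ρ : Equiv.Perm (Fin n), (∀ i ∈ T, ρ i = i) →
      ∀ x : Fin n, (x ∉ T ↔ ρ x ∉ T) := by
    intro ρ hρ x
    have hmem : x ∈ T ↔ ρ x ∈ T := by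
      constructor
      · intro hx; rw [hρ x hx]; exact hx
      · intro hx
        have h2 : ρ (ρ x) = ρ x := hρ _ hx
        have h3 := ρ.injective h2
        rw [← h3]; exact hx
    exact not_congr hmem
  set f : Equiv.Perm (Fin n) → Equiv.Perm {x : Fin n // x ∉ T} := fun ρ =>
    if h : ∀ i ∈ T, ρ i = i then ρ.subtypePerm (fun x => (hfun ρ h x).symm) else 1 with hf
  have hle : (Finset.univ.filter fun ρ : Equiv.Perm (Fin n) => ∀ i ∈ T, ρ i = i).card
      ≤ (Finset.univ : Finset (Equiv.Perm {x : Fin n // x ∉ T})).card := by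
    apply Finset.card_le_card_of_injOn f (fun _ _ => Finset.mem_univ _)
    intro ρ hρ ρ' hρ' heq
    have h1 := (Finset.mem_filter.mp (Finset.mem_coe.mp hρ)).2
    have h2 := (Finset.mem_filter.mp (Finset.mem_coe.mp hρ')).2
    rw [hf] at heq
    dsimp only at heq
    rw [dif_pos h1, dif_pos h2] at heq
    apply Equiv.ext
    intro x
    by_cases hx : x ∈ T
    · rw [h1 x hx, h2 x hx]
    · have h4 := congrArg
        (fun (e : Equiv.Perm {x : Fin n // x ∉ T}) => (e ⟨x, hx⟩ : {x : Fin n // x ∉ T})) heq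
      simpa [Equiv.Perm.subtypePerm_apply, Subtype.ext_iff] using h4
  calc (Finset.univ.filter fun ρ : Equiv.Perm (Fin n) => ∀ i ∈ T, ρ i = i).card
      ≤ (Finset.univ : Finset (Equiv.Perm {x : Fin n // x ∉ T})).card := hle
    _ = (Fintype.card {x : Fin n // x ∉ T}).factorial := by
        rw [Finset.card_univ, Fintype.card_perm]
    _ = (n - T.card).factorial := by
        rw [Fintype.card_subtype_compl, Fintype.card_coe, Fintype.card_fin]

lemma rect_bound (n : ℕ) (hn : 1000000 ≤ n) (r : (Fin n × Fin n → Bool) → Bool)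
    (hbal : IsBalancedRectangle r)
    (hsub : ∀ x, r x = true → 2^(2*n) - 1 ≤ pbWeight n x) :
    (Finset.univ.filter fun σ : Equiv.Perm (Fin n) => r (xMat σ) = true).card
      * 2^((n/64 - (n/64)/2)/130) ≤ n.factorial := by
  classical
  set s := n/64 with hs
  set K := (s - s/2)/130 with hK
  set P := Finset.univ.filter fun σ : Equiv.Perm (Fin n) => r (xMat σ) = true with hP
  rcases Finset.eq_empty_or_nonempty P with hPe | ⟨σ0, hσ0⟩
  · rw [hPe]; simp
  obtain ⟨X1, X2, ⟨hu, hd, ρ1, ρ2, hρ1, hρ2, hr⟩, hb1, hb2⟩ := hbal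
  have hcardX : Fintype.card (Fin n × Fin n) = n*n := by
    rw [Fintype.card_prod, Fintype.card_fin]
  rw [hcardX] at hb1 hb2
  have hmem : ∀ σ, σ ∈ P ↔ r (xMat σ) = true := fun σ => by
    rw [hP, Finset.mem_filter]; simp
  have hσ0r : r (xMat σ0) = true := (hmem σ0).mp hσ0
  set A := Finset.univ.filter (fun i : Fin n => (i, σ0 i) ∈ X1) with hA
  set B := A.image σ0 with hB
  set k := A.card with hk
  have hBcard : B.card = k := by rw [hB, hk]; exact Finset.card_image_of_injective _ σ0.injective
  have hkn : k ≤ n := by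
    rw [hk]
    calc A.card ≤ (Finset.univ : Finset (Fin n)).card :=
          Finset.card_le_card (Finset.subset_univ _)
      _ = n := by rw [Finset.card_univ, Fintype.card_fin]
  have hBccard : Bᶜ.card = n - k := by rw [Finset.card_compl, hBcard, Fintype.card_fin]
  have hAiff : ∀ i : Fin n, (i ∈ A ↔ (i, σ0 i) ∈ X1) := by
    intro i; rw [hA, Finset.mem_filter]; simp
  have hBiff : ∀ j : Fin n, (j ∈ B ↔ (σ0⁻¹ j, j) ∈ X1) := by
    intro j
    rw [hB]
    constructor
    · intro hj
      obtain ⟨i, hiA, hij⟩ := Finset.mem_image.mp hj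
      have hi2 : i = σ0⁻¹ j := by rw [← hij]; exact (Equiv.symm_apply_apply σ0 i).symm
      have hX := (hAiff i).mp hiA
      subst hi2
      rw [Equiv.Perm.coe_inv, Equiv.apply_symm_apply] at hX
      exact hX
    · intro hX
      apply Finset.mem_image.mpr
      refine ⟨σ0⁻¹ j, ?_, Equiv.apply_symm_apply σ0 j⟩
      apply (hAiff _).mpr
      rw [Equiv.Perm.coe_inv, Equiv.apply_symm_apply]
      exact hX
  -- structure of accepted permutations
  have hstruct : ∀ σ, σ ∈ P → (∀ i, ((i, σ i) ∈ X1 ↔ i ∈ A)) ∧ (∀ i, (σ i ∈ B ↔ i ∈ A)) := by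
    intro σ hσP
    have hσr := (hmem σ).mp hσP
    obtain ⟨hrow, hcol⟩ := mix_one X1 X2 ρ1 ρ2 r hu hd hρ1 hρ2 hr hsub σ σ0 hσr hσ0r
    have hrowA : ∀ i, ((i, σ i) ∈ X1 ↔ i ∈ A) := by
      intro i
      rw [hrow i, hAiff i]
    refine ⟨hrowA, fun i => ?_⟩
    rw [hBiff (σ i), ← hcol (σ i), Equiv.Perm.coe_inv, Equiv.symm_apply_apply]
    exact hrowA i
  -- rows of X1 and forbidden sets
  set R : Fin n → Finset (Fin n) := fun i => Finset.univ.filter (fun j => (i,j) ∈ X1) with hR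
  set G : Fin n → Finset (Fin n) := fun i =>
    if i ∈ A then Bᶜ ∪ (B \ R i) else B ∪ (Bᶜ ∩ R i) with hG
  have havoid : ∀ σ, σ ∈ P → ∀ i, σ i ∉ G i := by
    intro σ hσP i hmemG
    obtain ⟨h1, h2⟩ := hstruct σ hσP
    rw [hG] at hmemG
    dsimp only at hmemG
    by_cases hiA : i ∈ A
    · rw [if_pos hiA] at hmemG
      rcases Finset.mem_union.mp hmemG with hc | hc
      · exact (Finset.mem_compl.mp hc) ((h2 i).mpr hiA)
      · have hRi : σ i ∈ R i := by
          rw [hR]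
          exact Finset.mem_filter.mpr ⟨Finset.mem_univ _, (h1 i).mpr hiA⟩
        exact (Finset.mem_sdiff.mp hc).2 hRi
    · rw [if_neg hiA] at hmemG
      rcases Finset.mem_union.mp hmemG with hc | hc
      · exact hiA ((h2 i).mp hc)
      · have hRi : (i, σ i) ∈ X1 := by
          have := (Finset.mem_inter.mp hc).2
          rw [hR] at this
          exact (Finset.mem_filter.mp this).2
        exact hiA ((h1 i).mp hRi)
  -- G cards
  have hGcardA : ∀ i ∈ A, (G i).card = (n - k) + (B \ R i).card := by
    intro i hiA
    rw [hG]; dsimp only; rw [if_pos hiA]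
    rw [Finset.card_union_of_disjoint, hBccard]
    rw [Finset.disjoint_left]
    intro j hj hj2
    exact (Finset.mem_compl.mp hj) (Finset.mem_sdiff.mp hj2).1
  have hGcardN : ∀ i ∈ Aᶜ, (G i).card = k + (Bᶜ ∩ R i).card := by
    intro i _
    rw [hG]; dsimp only
    rename_i hiA
    rw [if_neg (Finset.mem_compl.mp hiA)]
    rw [Finset.card_union_of_disjoint, hBcard]
    rw [Finset.disjoint_left]
    intro j hj hj2
    exact (Finset.mem_compl.mp (Finset.mem_inter.mp hj2).1) hj
  
  -- sums
  set e2 := ∑ i ∈ A, (B \ R i).card with he2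
  set e1 := ∑ i ∈ Aᶜ, (Bᶜ ∩ R i).card with he1
  have hAccard : Aᶜ.card = n - k := by rw [Finset.card_compl, ← hk, Fintype.card_fin]
  have hGsum : ∑ i : Fin n, (G i).card = (k*(n-k) + e2) + ((n-k)*k + e1) := by
    rw [← Finset.sum_add_sum_compl A (fun i => (G i).card)]
    congr 1
    · rw [Finset.sum_congr rfl hGcardA, Finset.sum_add_distrib, Finset.sum_const,
        smul_eq_mul, he2, ← hk]
    · rw [Finset.sum_congr rfl hGcardN, Finset.sum_add_distrib, Finset.sum_const,
        smul_eq_mul, he1, hAccard]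
  have hX1sum : X1.card = ∑ i : Fin n, (R i).card := card_block X1
  -- row bounds
  have hrowle : ∀ i ∈ A, (R i).card + (B \ R i).card ≤ n := by
    intro i _
    have h1 := Finset.card_inter_add_card_sdiff B (R i)
    rw [hBcard] at h1
    have h2 := Finset.card_inter_add_card_sdiff (R i) B
    have h3 : (R i \ B).card ≤ n - k := by
      rw [← hBccard]
      exact Finset.card_le_card (fun j hj => Finset.mem_compl.mpr (Finset.mem_sdiff.mp hj).2)
    have h4 : (R i ∩ B).card = (B ∩ R i).card := by rw [Finset.inter_comm]
    omega
  have hrowge : ∀ i ∈ A, n ≤ (R i).card + ((n - k) + (B \ R i).card) := by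
    intro i _
    have h1 := Finset.card_inter_add_card_sdiff B (R i)
    rw [hBcard] at h1
    have h5 : (B ∩ R i).card ≤ (R i).card := Finset.card_le_card Finset.inter_subset_right
    omega
  have hrowN : ∀ i ∈ Aᶜ, (R i).card ≤ k + (Bᶜ ∩ R i).card := by
    intro i _
    have h2 := Finset.card_inter_add_card_sdiff (R i) B
    have h3 : (R i ∩ B).card ≤ k := by
      rw [← hBcard]; exact Finset.card_le_card Finset.inter_subset_right
    have h4 : (R i \ B).card = (Bᶜ ∩ R i).card := by
      congr 1
      ext j
      simp only [Finset.mem_sdiff, Finset.mem_inter, Finset.mem_compl]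
      tauto
    omega
  -- global bounds
  have hSA_le : (∑ i ∈ A, (R i).card) + e2 ≤ k*n := by
    rw [he2, ← Finset.sum_add_distrib]
    calc ∑ i ∈ A, ((R i).card + (B \ R i).card) ≤ ∑ _i ∈ A, n :=
          Finset.sum_le_sum hrowle
      _ = k*n := by rw [Finset.sum_const, smul_eq_mul, hk]
  have hSA_ge : k*n ≤ (∑ i ∈ A, (R i).card) + (k*((n-k)) + e2) := by
    have h0 : (∑ _i ∈ A, n) ≤ ∑ i ∈ A, ((R i).card + ((n - k) + (B \ R i).card)) :=
      Finset.sum_le_sum hrowge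
    rw [Finset.sum_const, smul_eq_mul, ← hk] at h0
    rw [Finset.sum_add_distrib, Finset.sum_add_distrib, Finset.sum_const, smul_eq_mul, ← hk,
      ← he2] at h0
    omega
  have hSAc : (∑ i ∈ Aᶜ, (R i).card) ≤ (n-k)*k + e1 := by
    calc (∑ i ∈ Aᶜ, (R i).card) ≤ ∑ i ∈ Aᶜ, (k + (Bᶜ ∩ R i).card) :=
          Finset.sum_le_sum hrowN
      _ = (n-k)*k + e1 := by
          rw [Finset.sum_add_distrib, Finset.sum_const, smul_eq_mul, hAccard, ← he1]
  have hX1split : X1.card = (∑ i ∈ A, (R i).card) + ∑ i ∈ Aᶜ, (R i).card := by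
    rw [hX1sum, Finset.sum_add_sum_compl A (fun i => (R i).card)]
  have hcomm1 : (n-k)*k = k*(n-k) := Nat.mul_comm _ _
  have harith := block_arith n k (n-k) X1.card e1 e2 (by omega) (by omega)
    (by omega) (by omega) hb1 hb2
  have hGsum2 : n*n ≤ 32 * ∑ i : Fin n, (G i).card := by
    rw [hGsum]; omega
  -- heavy rows
  have hGle : ∀ i, (G i).card ≤ n := by
    intro i
    calc (G i).card ≤ (Finset.univ : Finset (Fin n)).card :=
          Finset.card_le_card (Finset.subset_univ _)
      _ = n := by rw [Finset.card_univ, Fintype.card_fin]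
  set H := Finset.univ.filter (fun i : Fin n => s ≤ (G i).card) with hH
  have hHs : s ≤ H.card := by
    have hsum1 : ∑ i ∈ H, (G i).card ≤ H.card * n := by
      calc ∑ i ∈ H, (G i).card ≤ ∑ _i ∈ H, n := Finset.sum_le_sum (fun i _ => hGle i)
        _ = H.card * n := by rw [Finset.sum_const, smul_eq_mul]
    have hsum2 : ∑ i ∈ Hᶜ, (G i).card ≤ n * s := by
      calc ∑ i ∈ Hᶜ, (G i).card ≤ ∑ _i ∈ Hᶜ, s := by
            apply Finset.sum_le_sum
            intro i hi
            have h6 := Finset.mem_compl.mp hi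
            rw [hH, Finset.mem_filter] at h6
            push_neg at h6
            have := h6 (Finset.mem_univ i)
            omega
        _ = Hᶜ.card * s := by rw [Finset.sum_const, smul_eq_mul]
        _ ≤ n * s := by
            apply Nat.mul_le_mul_right
            calc Hᶜ.card ≤ (Finset.univ : Finset (Fin n)).card :=
                  Finset.card_le_card (Finset.subset_univ _)
              _ = n := by rw [Finset.card_univ, Fintype.card_fin]
    have htot := Finset.sum_add_sum_compl H (fun i => (G i).card)
    have h64 : 64 * s ≤ n := by omega
    have hns : 64*(n*s) ≤ n*n := by
      calc 64*(n*s) = n*(64*s) := by ring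
        _ ≤ n*n := Nat.mul_le_mul_left n h64
    have hkey : n*n ≤ 64*(H.card*n) := by omega
    have hkey2 : n ≤ 64*H.card := by
      have h7 : n*n ≤ (64*H.card)*n := by
        calc n*n ≤ 64*(H.card*n) := hkey
          _ = (64*H.card)*n := by ring
      exact Nat.le_of_mul_le_mul_right h7 (by omega)
    omega
  obtain ⟨T, hTH, hTcard⟩ := Finset.exists_subset_card_eq hHs
  have hTG : ∀ i ∈ T, s ≤ (G i).card := by
    intro i hi
    have := hTH hi
    rw [hH, Finset.mem_filter] at this
    exact this.2
  -- counting
  set φ : Equiv.Perm (Fin n) → ({x : Fin n // x ∈ T} → Fin n) := fun σ i => σ i.val with hφ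
  set Pi := Fintype.piFinset (fun i : {x : Fin n // x ∈ T} => (G i.val)ᶜ) with hPi
  have himg : ∀ σ ∈ P, φ σ ∈ Pi := by
    intro σ hσ
    rw [hPi, Fintype.mem_piFinset]
    intro i
    rw [Finset.mem_compl]
    exact havoid σ hσ i.val
  have hPcard : P.card = ∑ v ∈ Pi, (P.filter fun σ => φ σ = v).card :=
    Finset.card_eq_sum_card_fiberwise himg
  have hfiber : ∀ v, (P.filter fun σ => φ σ = v).card ≤ (n - s).factorial := by
    intro v
    rcases Finset.eq_empty_or_nonempty (P.filter fun σ => φ σ = v) with he | ⟨σ1, hσ1⟩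
    · rw [he]; simp
    have hσ1v : φ σ1 = v := (Finset.mem_filter.mp hσ1).2
    have hinj : (P.filter fun σ => φ σ = v).card
        ≤ (Finset.univ.filter fun ρ : Equiv.Perm (Fin n) => ∀ i ∈ T, ρ i = i).card := by
      apply Finset.card_le_card_of_injOn (fun σ => σ1⁻¹ * σ)
      · intro σ hσ
        have hσv : φ σ = v := (Finset.mem_filter.mp hσ).2
        rw [Finset.mem_coe, Finset.mem_filter]
        refine ⟨Finset.mem_univ _, fun i hi => ?_⟩
        have h8 : σ i = σ1 i := congrFun (hσv.trans hσ1v.symm) ⟨i, hi⟩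
        show σ1⁻¹ (σ i) = i
        rw [h8]
        exact Equiv.symm_apply_apply σ1 i
      · intro σ _ σ' _ heq
        exact mul_left_cancel heq
    calc (P.filter fun σ => φ σ = v).card
        ≤ (Finset.univ.filter fun ρ : Equiv.Perm (Fin n) => ∀ i ∈ T, ρ i = i).card := hinj
      _ ≤ (n - T.card).factorial := stab_card T
      _ = (n - s).factorial := by rw [hTcard]
  have hPicard : Pi.card ≤ (n - s)^s := by
    rw [hPi, Fintype.card_piFinset]
    calc ∏ i : {x : Fin n // x ∈ T}, ((G i.val)ᶜ).card
        ≤ ∏ _i : {x : Fin n // x ∈ T}, (n - s) := by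
          apply Finset.prod_le_prod'
          intro i _
          rw [Finset.card_compl, Fintype.card_fin]
          have := hTG i.val i.2
          omega
      _ = (n - s)^(Fintype.card {x : Fin n // x ∈ T}) := Finset.prod_const _
      _ = (n - s)^s := by rw [Fintype.card_coe, hTcard]
  have hPbound : P.card ≤ (n - s)^s * (n - s).factorial := by
    calc P.card = ∑ v ∈ Pi, (P.filter fun σ => φ σ = v).card := hPcard
      _ ≤ ∑ _v ∈ Pi, (n - s).factorial := Finset.sum_le_sum (fun v _ => hfiber v)
      _ = Pi.card * (n - s).factorial := by rw [Finset.sum_const, smul_eq_mul]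
      _ ≤ (n - s)^s * (n - s).factorial := Nat.mul_le_mul_right _ hPicard
  calc P.card * 2^K ≤ ((n - s)^s * (n - s).factorial) * 2^K :=
        Nat.mul_le_mul_right _ hPbound
    _ ≤ n.factorial := key_arith n hn

theorem stmt0 :
    ∃ c : ℝ, 0 < c ∧ ∃ n₀ : ℕ, ∀ n : ℕ, n₀ ≤ n →
      ∀ L : List ((Fin n × Fin n → Bool) → Bool),
        IsBalancedRectangleCover L (fPB n) →
        (2 : ℝ) ^ (c * n) ≤ L.length := by
  classical
  refine ⟨1/20000, by norm_num, 1000000, ?_⟩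
  intro n hn L hL
  obtain ⟨hbalL, hcov⟩ := hL
  set K := (n/64 - (n/64)/2)/130 with hK
  have hsub : ∀ r ∈ L, ∀ x, r x = true → 2^(2*n) - 1 ≤ pbWeight n x := by
    intro r hr x hx
    have hfx : fPB n x = true := (hcov x).mpr ⟨r, hr, hx⟩
    unfold fPB at hfx
    exact of_decide_eq_true hfx
  have hrect : ∀ r ∈ L,
      (Finset.univ.filter fun σ : Equiv.Perm (Fin n) => r (xMat σ) = true).card * 2^K
        ≤ n.factorial :=
    fun r hr => rect_bound n hn r (hbalL r hr) (hsub r hr)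
  have hcover : (Finset.univ : Finset (Equiv.Perm (Fin n)))
      ⊆ L.toFinset.biUnion (fun r => Finset.univ.filter fun σ => r (xMat σ) = true) := by
    intro σ _
    have hf : fPB n (xMat σ) = true := by
      unfold fPB
      rw [decide_eq_true_eq, pbWeight_perm]
    obtain ⟨r, hrL, hrx⟩ := (hcov (xMat σ)).mp hf
    exact Finset.mem_biUnion.mpr ⟨r, List.mem_toFinset.mpr hrL,
      Finset.mem_filter.mpr ⟨Finset.mem_univ _, hrx⟩⟩
  have h1 : n.factorial
      ≤ ∑ r ∈ L.toFinset, (Finset.univ.filter fun σ => r (xMat σ) = true).card := by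
    calc n.factorial = (Finset.univ : Finset (Equiv.Perm (Fin n))).card := by
          rw [Finset.card_univ, Fintype.card_perm, Fintype.card_fin]
      _ ≤ (L.toFinset.biUnion (fun r => Finset.univ.filter fun σ => r (xMat σ) = true)).card :=
          Finset.card_le_card hcover
      _ ≤ ∑ r ∈ L.toFinset, (Finset.univ.filter fun σ => r (xMat σ) = true).card :=
          Finset.card_biUnion_le
  have h2 : n.factorial * 2^K ≤ L.length * n.factorial := by
    calc n.factorial * 2^K
        ≤ (∑ r ∈ L.toFinset, (Finset.univ.filter fun σ => r (xMat σ) = true).card) * 2^K :=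
          Nat.mul_le_mul_right _ h1
      _ = ∑ r ∈ L.toFinset, (Finset.univ.filter fun σ => r (xMat σ) = true).card * 2^K :=
          Finset.sum_mul _ _ _
      _ ≤ ∑ _r ∈ L.toFinset, n.factorial :=
          Finset.sum_le_sum (fun r hr => hrect r (List.mem_toFinset.mp hr))
      _ = L.toFinset.card * n.factorial := by rw [Finset.sum_const, smul_eq_mul]
      _ ≤ L.length * n.factorial := Nat.mul_le_mul_right _ (List.toFinset_card_le L)
  have h3 : 2^K ≤ L.length := by
    have hpos : 0 < n.factorial := Nat.factorial_pos n
    have h4 : 2^K * n.factorial ≤ L.length * n.factorial := by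
      calc 2^K * n.factorial = n.factorial * 2^K := Nat.mul_comm _ _
        _ ≤ L.length * n.factorial := h2
    exact Nat.le_of_mul_le_mul_right h4 hpos
  have hKn : (1/20000 : ℝ) * n ≤ (K : ℝ) := by
    have h5 : n ≤ 20000 * K := by rw [hK]; clear * - hn; omega
    have h6 : (n : ℝ) ≤ 20000 * (K : ℝ) := by exact_mod_cast h5
    linarith
  calc (2 : ℝ) ^ ((1/20000 : ℝ) * n) ≤ (2 : ℝ) ^ (K : ℝ) :=
        Real.rpow_le_rpow_of_exponent_le one_le_two hKn
    _ = ((2^K : ℕ) : ℝ) := by rw [Real.rpow_natCast]; push_cast; ring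
    _ ≤ (L.length : ℝ) := Nat.cast_le.mpr h3
end

section
/- Let f be a pseudo-Boolean constraint on a finite variable set X with positive integer weights and threshold θ, and let f* be the Boolean function on X whose models are exactly the threshold models of f. Then C(f) ≥ C(f*): the minimum size of a balanced rectangle cover of f is at least the minimum size of a balanced rectangle cover of f*. -/
lemma key {m : ℕ} (w : Fin m → ℕ) (θ : ℕ) (r : (Fin m → Bool) → Bool)
    (hr : IsBalancedRectangle r)
    (hsub : ∀ x, r x = true → θ ≤ ∑ i, if x i = true then w i else 0) :
    ∃ r' : (Fin m → Bool) → Bool, IsBalancedRectangle r' ∧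
      (∀ x, r' x = true → r x = true ∧ (∑ i, if x i = true then w i else 0) = θ) ∧
      (∀ x, r x = true → (∑ i, if x i = true then w i else 0) = θ → r' x = true) := by
  obtain ⟨X1, X2, ⟨hun, hint, ρ1, ρ2, h1, h2, hrx⟩, hb1, hb2⟩ := hr
  set w1 : (Fin m → Bool) → ℕ := fun x => ∑ i ∈ X1, if x i = true then w i else 0 with hw1
  set w2 : (Fin m → Bool) → ℕ := fun x => ∑ i ∈ X2, if x i = true then w i else 0 with hw2
  have hdisj : Disjoint X1 X2 := Finset.disjoint_iff_inter_eq_empty.mpr hint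
  have hW : ∀ x, (∑ i, if x i = true then w i else 0) = w1 x + w2 x := by
    intro x
    rw [hw1, hw2]
    rw [show (Finset.univ : Finset (Fin m)) = X1 ∪ X2 from hun.symm,
      Finset.sum_union hdisj]
  have hd1 : ∀ x y : Fin m → Bool, (∀ v ∈ X1, x v = y v) → w1 x = w1 y := by
    intro x y hxy
    exact Finset.sum_congr rfl fun i hi => by rw [hxy i hi]
  have hd2 : ∀ x y : Fin m → Bool, (∀ v ∈ X2, x v = y v) → w2 x = w2 y := by
    intro x y hxy
    exact Finset.sum_congr rfl fun i hi => by rw [hxy i hi]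
  by_cases h : ∃ x, r x = true ∧ w1 x + w2 x = θ
  · obtain ⟨x0, hx0r, hx0⟩ := h
    have hx0' : ρ1 x0 = true ∧ ρ2 x0 = true := by
      have := hrx x0; rw [hx0r] at this; simpa using this.symm
    set S1 : Set ℕ := {n | ∃ y, ρ1 y = true ∧ w1 y = n} with hS1
    set S2 : Set ℕ := {n | ∃ y, ρ2 y = true ∧ w2 y = n} with hS2
    set a := sInf S1 with ha
    set b := sInf S2 with hb
    have hS1ne : S1.Nonempty := ⟨w1 x0, x0, hx0'.1, rfl⟩
    have hS2ne : S2.Nonempty := ⟨w2 x0, x0, hx0'.2, rfl⟩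
    obtain ⟨y1, hy1ρ, hy1w⟩ := Nat.sInf_mem hS1ne
    obtain ⟨y2, hy2ρ, hy2w⟩ := Nat.sInf_mem hS2ne
    set z : Fin m → Bool := fun i => if i ∈ X1 then y1 i else y2 i with hz
    have hz1 : ∀ v ∈ X1, z v = y1 v := fun v hv => by simp [hz, hv]
    have hz2 : ∀ v ∈ X2, z v = y2 v := fun v hv => by
      have : v ∉ X1 := fun hv1 => (Finset.disjoint_left.mp hdisj hv1) hv
      simp [hz, this]
    have hzρ1 : ρ1 z = true := (h1 z y1 hz1).trans hy1ρ
    have hzρ2 : ρ2 z = true := (h2 z y2 hz2).trans hy2ρ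
    have hzw1 : w1 z = a := (hd1 z y1 hz1).trans hy1w
    have hzw2 : w2 z = b := (hd2 z y2 hz2).trans hy2w
    have hzr : r z = true := by rw [hrx z, hzρ1, hzρ2]; rfl
    have hge : θ ≤ a + b := by
      have := hsub z hzr
      rwa [hW z, hzw1, hzw2] at this
    have hle : a + b ≤ θ := by
      have ha' : a ≤ w1 x0 := Nat.sInf_le ⟨x0, hx0'.1, rfl⟩
      have hb' : b ≤ w2 x0 := Nat.sInf_le ⟨x0, hx0'.2, rfl⟩
      omega
    have hab : a + b = θ := le_antisymm hle hge
    refine ⟨fun x => r x && decide (w1 x = a) && decide (w2 x = b), ?_, ?_, ?_⟩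
    · refine ⟨X1, X2, ⟨hun, hint, fun x => ρ1 x && decide (w1 x = a),
        fun x => ρ2 x && decide (w2 x = b), ?_, ?_, ?_⟩, hb1, hb2⟩
      · intro x y hxy; dsimp only; rw [h1 x y hxy, hd1 x y hxy]
      · intro x y hxy; dsimp only; rw [h2 x y hxy, hd2 x y hxy]
      · intro x
        dsimp only
        rw [hrx x]
        cases ρ1 x <;> cases ρ2 x <;> simp
    · intro x hx
      simp only [Bool.and_eq_true, decide_eq_true_eq] at hx
      exact ⟨hx.1.1, by rw [hW x, hx.1.2, hx.2, hab]⟩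
    · intro x hx hxθ
      have hρ : ρ1 x = true ∧ ρ2 x = true := by
        have := hrx x; rw [hx] at this; simpa using this.symm
      have ha' : a ≤ w1 x := Nat.sInf_le ⟨x, hρ.1, rfl⟩
      have hb' : b ≤ w2 x := Nat.sInf_le ⟨x, hρ.2, rfl⟩
      rw [hW x] at hxθ
      have hwa : w1 x = a := by omega
      have hwb : w2 x = b := by omega
      simp [hx, hwa, hwb]
  · refine ⟨fun _ => false, ?_, ?_, ?_⟩
    · exact ⟨X1, X2, ⟨hun, hint, fun _ => false, fun _ => false,
        fun _ _ _ => rfl, fun _ _ _ => rfl, fun x => rfl⟩, hb1, hb2⟩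
    · intro x hx; simp at hx
    · intro x hx hxθ
      exact absurd ⟨x, hx, by rwa [← hW x]⟩ h

lemma main {m : ℕ} (w : Fin m → ℕ) (θ : ℕ) :
    ∀ (L : List ((Fin m → Bool) → Bool)),
      (∀ r ∈ L, IsBalancedRectangle r) →
      (∀ r ∈ L, ∀ x, r x = true → θ ≤ ∑ i, if x i = true then w i else 0) →
      ∃ L' : List ((Fin m → Bool) → Bool),
        (∀ r' ∈ L', IsBalancedRectangle r') ∧ L'.length = L.length ∧
        ∀ x, (∃ r' ∈ L', r' x = true) ↔
          ∃ r ∈ L, r x = true ∧ (∑ i, if x i = true then w i else 0) = θ := by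
  intro L
  induction L with
  | nil => exact fun _ _ => ⟨[], by simp, rfl, by simp⟩
  | cons r L ih =>
    intro hA hB
    obtain ⟨L', h1, h2, h3⟩ := ih (fun s hs => hA s (List.mem_cons_of_mem _ hs))
      (fun s hs => hB s (List.mem_cons_of_mem _ hs))
    obtain ⟨r', hr'b, hfwd, hbwd⟩ := key w θ r (hA r List.mem_cons_self)
      (hB r List.mem_cons_self)
    refine ⟨r' :: L', ?_, by simp [h2], ?_⟩
    · intro s hs
      rcases List.mem_cons.mp hs with h | h
      · exact h ▸ hr'b
      · exact h1 s h
    · intro x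
      simp only [List.mem_cons]
      constructor
      · rintro ⟨s, hs | hs, hsx⟩
        · exact ⟨r, Or.inl rfl, (hfwd x (hs ▸ hsx)).1, (hfwd x (hs ▸ hsx)).2⟩
        · obtain ⟨t, ht, htx, htθ⟩ := (h3 x).mp ⟨s, hs, hsx⟩
          exact ⟨t, Or.inr ht, htx, htθ⟩
      · rintro ⟨s, hs | hs, hsx, hsθ⟩
        · exact ⟨r', Or.inl rfl, hbwd x (hs ▸ hsx) hsθ⟩
        · obtain ⟨t, ht, htx⟩ := (h3 x).mpr ⟨s, hs, hsx, hsθ⟩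
          exact ⟨t, Or.inr ht, htx⟩

theorem stmt2 (m : ℕ) (w : Fin m → ℕ) (θ : ℕ) (hw : ∀ i, 0 < w i) (hθ : 0 < θ)
    (f fstar : (Fin m → Bool) → Bool)
    (hf : ∀ x, f x = true ↔ θ ≤ ∑ i, if x i = true then w i else 0)
    (hfstar : ∀ x, fstar x = true ↔ (∑ i, if x i = true then w i else 0) = θ)
    (L : List ((Fin m → Bool) → Bool)) (hL : IsBalancedRectangleCover L f) :
    ∃ L' : List ((Fin m → Bool) → Bool),
      IsBalancedRectangleCover L' fstar ∧ L'.length ≤ L.length := by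
  obtain ⟨hrect, hcov⟩ := hL
  obtain ⟨L', h1, h2, h3⟩ := main w θ L hrect
    (fun r hr x hx => (hf x).mp ((hcov x).mpr ⟨r, hr, hx⟩))
  refine ⟨L', ⟨h1, ?_⟩, h2.le⟩
  intro x
  rw [hfstar x, h3 x]
  constructor
  · intro hθx
    obtain ⟨r, hr, hrx⟩ := (hcov x).mp ((hf x).mpr hθx.ge)
    exact ⟨r, hr, hrx, hθx⟩
  · rintro ⟨r, _, _, hθx⟩
    exact hθx
end

section
/- Let f be a pseudo-Boolean constraint on a finite variable set X with positive integer weights and threshold θ. Let r be a rectangle with respect to a partition (X1, X2) of X such that every model of r is a model of f, and suppose r accepts at least one threshold model of f. Then there exist nonnegative integers θ1 and θ2 with θ1 + θ2 = θ such that every threshold model x of f accepted by r satisfies w(x|X1) = θ1 and w(x|X2) = θ2, where w(x|Xi) denotes the sum of the weights of the variables in Xi set to 1 in x. -/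
theorem stmt3 (m : ℕ) (w : Fin m → ℕ) (θ : ℕ) (hw : ∀ i, 0 < w i) (hθ : 0 < θ)
    (X1 X2 : Finset (Fin m)) (r : (Fin m → Bool) → Bool)
    (hr : IsRectangle X1 X2 r)
    (hmodels : ∀ x, r x = true → θ ≤ ∑ i, if x i = true then w i else 0)
    (hthresh : ∃ x, r x = true ∧ (∑ i, if x i = true then w i else 0) = θ) :
    ∃ θ1 θ2 : ℕ, θ1 + θ2 = θ ∧
      ∀ x, r x = true → (∑ i, if x i = true then w i else 0) = θ →
        (∑ i ∈ X1, if x i = true then w i else 0) = θ1 ∧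
        (∑ i ∈ X2, if x i = true then w i else 0) = θ2 := by
  obtain ⟨hun, hdisj, ρ1, ρ2, hρ1, hρ2, hrx⟩ := hr
  have hdis : Disjoint X1 X2 := Finset.disjoint_iff_inter_eq_empty.mpr hdisj
  have hsplit : ∀ x : Fin m → Bool, (∑ i, if x i = true then w i else 0) =
      (∑ i ∈ X1, if x i = true then w i else 0) + (∑ i ∈ X2, if x i = true then w i else 0) := by
    intro x
    rw [← Finset.sum_union hdis, hun]
  obtain ⟨x0, hrx0, hx0θ⟩ := hthresh
  refine ⟨∑ i ∈ X1, if x0 i = true then w i else 0, ∑ i ∈ X2, if x0 i = true then w i else 0,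
    by rw [← hsplit, hx0θ], ?_⟩
  intro x hrxt hxθ
  -- ρ1/ρ2 true for x and x0
  have h1x : ρ1 x = true ∧ ρ2 x = true := by
    have := hrx x; rw [hrxt] at this
    exact ⟨(Bool.and_eq_true _ _ |>.mp this.symm).1, (Bool.and_eq_true _ _ |>.mp this.symm).2⟩
  have h1x0 : ρ1 x0 = true ∧ ρ2 x0 = true := by
    have := hrx x0; rw [hrx0] at this
    exact ⟨(Bool.and_eq_true _ _ |>.mp this.symm).1, (Bool.and_eq_true _ _ |>.mp this.symm).2⟩
  have hnot2 : ∀ i ∈ X2, i ∉ X1 := by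
    intro i hi2 hi1
    have : i ∈ X1 ∩ X2 := Finset.mem_inter.mpr ⟨hi1, hi2⟩
    rw [hdisj] at this; exact absurd this (Finset.notMem_empty i)
  -- mixed assignment z : x on X1, x0 elsewhere
  set z : Fin m → Bool := fun i => if i ∈ X1 then x i else x0 i with hz
  have hrz : r z = true := by
    rw [hrx z]
    have e1 : ρ1 z = ρ1 x := hρ1 z x (fun v hv => by simp [hz, hv])
    have e2 : ρ2 z = ρ2 x0 := hρ2 z x0 (fun v hv => by simp [hz, hnot2 v hv])
    rw [e1, e2, h1x.1, h1x0.2]; rfl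
  have hzsum : (∑ i, if z i = true then w i else 0) =
      (∑ i ∈ X1, if x i = true then w i else 0) + (∑ i ∈ X2, if x0 i = true then w i else 0) := by
    rw [hsplit z]
    congr 1
    · exact Finset.sum_congr rfl (fun i hi => by simp [hz, hi])
    · exact Finset.sum_congr rfl (fun i hi => by simp [hz, hnot2 i hi])
  have hθz : θ ≤ (∑ i ∈ X1, if x i = true then w i else 0) +
      (∑ i ∈ X2, if x0 i = true then w i else 0) := hzsum ▸ hmodels z hrz
  -- mixed assignment z' : x0 on X1, x elsewhere
  set z' : Fin m → Bool := fun i => if i ∈ X1 then x0 i else x i with hz'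
  have hrz' : r z' = true := by
    rw [hrx z']
    have e1 : ρ1 z' = ρ1 x0 := hρ1 z' x0 (fun v hv => by simp [hz', hv])
    have e2 : ρ2 z' = ρ2 x := hρ2 z' x (fun v hv => by simp [hz', hnot2 v hv])
    rw [e1, e2, h1x0.1, h1x.2]; rfl
  have hzsum' : (∑ i, if z' i = true then w i else 0) =
      (∑ i ∈ X1, if x0 i = true then w i else 0) + (∑ i ∈ X2, if x i = true then w i else 0) := by
    rw [hsplit z']
    congr 1
    · exact Finset.sum_congr rfl (fun i hi => by simp [hz', hi])
    · exact Finset.sum_congr rfl (fun i hi => by simp [hz', hnot2 i hi])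
  have hθz' : θ ≤ (∑ i ∈ X1, if x0 i = true then w i else 0) +
      (∑ i ∈ X2, if x i = true then w i else 0) := hzsum' ▸ hmodels z' hrz'
  have hx : (∑ i ∈ X1, if x i = true then w i else 0) +
      (∑ i ∈ X2, if x i = true then w i else 0) = θ := by rw [← hsplit, hxθ]
  have hx0 : (∑ i ∈ X1, if x0 i = true then w i else 0) +
      (∑ i ∈ X2, if x0 i = true then w i else 0) = θ := by rw [← hsplit, hx0θ]
  constructor <;> omega
end

section
/- Let f be a pseudo-Boolean constraint on a finite variable set X with positive integer weights and threshold θ. Let r be a rectangle with respect to a partition (X1, X2) of X such that every model of r is a model of f. Then there exists a rectangle r* with respect to the same partition (X1, X2) whose models are exactly the threshold models of f that are accepted by r. -/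
theorem stmt4 (m : ℕ) (w : Fin m → ℕ) (θ : ℕ) (hw : ∀ i, 0 < w i) (hθ : 0 < θ)
    (X1 X2 : Finset (Fin m)) (r : (Fin m → Bool) → Bool)
    (hr : IsRectangle X1 X2 r)
    (hmodels : ∀ x, r x = true → θ ≤ ∑ i, if x i = true then w i else 0) :
    ∃ rstar : (Fin m → Bool) → Bool, IsRectangle X1 X2 rstar ∧
      ∀ x, rstar x = true ↔
        (r x = true ∧ (∑ i, if x i = true then w i else 0) = θ) := by
  obtain ⟨hu, hi, ρ1, ρ2, hρ1, hρ2, hrx⟩ := hr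
  set w1 : (Fin m → Bool) → ℕ := fun x => ∑ i ∈ X1, if x i = true then w i else 0 with hw1def
  set w2 : (Fin m → Bool) → ℕ := fun x => ∑ i ∈ X2, if x i = true then w i else 0 with hw2def
  have hdisj : Disjoint X1 X2 := Finset.disjoint_iff_inter_eq_empty.mpr hi
  have hsplit : ∀ x : Fin m → Bool, (∑ i, if x i = true then w i else 0) = w1 x + w2 x := by
    intro x
    rw [hw1def, hw2def]
    rw [← Finset.sum_union hdisj, hu]
  have hw1dep : ∀ x y : Fin m → Bool, (∀ v ∈ X1, x v = y v) → w1 x = w1 y := by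
    intro x y h
    exact Finset.sum_congr rfl (fun i hiX => by rw [h i hiX])
  have hw2dep : ∀ x y : Fin m → Bool, (∀ v ∈ X2, x v = y v) → w2 x = w2 y := by
    intro x y h
    exact Finset.sum_congr rfl (fun i hiX => by rw [h i hiX])
  by_cases hex : ∃ x0, r x0 = true ∧ (∑ i, if x0 i = true then w i else 0) = θ
  · obtain ⟨x0, hr0, hW0⟩ := hex
    refine ⟨fun x => (ρ1 x && decide (w1 x = w1 x0)) && (ρ2 x && decide (w2 x = w2 x0)),
      ⟨hu, hi, fun x => ρ1 x && decide (w1 x = w1 x0),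
        fun x => ρ2 x && decide (w2 x = w2 x0), ?_, ?_, fun x => rfl⟩, ?_⟩
    · intro x y h
      dsimp only; rw [hρ1 x y h, hw1dep x y h]
    · intro x y h
      dsimp only; rw [hρ2 x y h, hw2dep x y h]
    · intro x
      simp only [Bool.and_eq_true, decide_eq_true_eq]
      constructor
      · rintro ⟨⟨h1, e1⟩, h2, e2⟩
        refine ⟨by rw [hrx]; simp [h1, h2], ?_⟩
        rw [hsplit, e1, e2, ← hsplit, hW0]
      · rintro ⟨hrxt, hWx⟩
        rw [hrx] at hrxt
        simp only [Bool.and_eq_true] at hrxt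
        obtain ⟨h1, h2⟩ := hrxt
        rw [hrx] at hr0
        simp only [Bool.and_eq_true] at hr0
        obtain ⟨h01, h02⟩ := hr0
        -- mix z : x on X1, x0 on X2
        set z : Fin m → Bool := fun i => if i ∈ X1 then x i else x0 i with hz
        have hz1 : ∀ v ∈ X1, z v = x v := fun v hv => by simp [hz, hv]
        have hz2 : ∀ v ∈ X2, z v = x0 v := fun v hv => by
          have : v ∉ X1 := fun hv1 => by
            have := Finset.mem_inter.mpr ⟨hv1, hv⟩; rw [hi] at this; exact absurd this (Finset.notMem_empty v)
          simp [hz, this]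
        have hrz : r z = true := by
          rw [hrx, hρ1 z x hz1, hρ2 z x0 hz2]; simp [h1, h02]
        have hzineq := hmodels z hrz
        rw [hsplit, hw1dep z x hz1, hw2dep z x0 hz2] at hzineq
        -- mix z' : x0 on X1, x on X2
        set z' : Fin m → Bool := fun i => if i ∈ X1 then x0 i else x i with hz'
        have hz'1 : ∀ v ∈ X1, z' v = x0 v := fun v hv => by simp [hz', hv]
        have hz'2 : ∀ v ∈ X2, z' v = x v := fun v hv => by
          have : v ∉ X1 := fun hv1 => by
            have := Finset.mem_inter.mpr ⟨hv1, hv⟩; rw [hi] at this; exact absurd this (Finset.notMem_empty v)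
          simp [hz', this]
        have hrz' : r z' = true := by
          rw [hrx, hρ1 z' x0 hz'1, hρ2 z' x hz'2]; simp [h01, h2]
        have hz'ineq := hmodels z' hrz'
        rw [hsplit, hw1dep z' x0 hz'1, hw2dep z' x hz'2] at hz'ineq
        rw [hsplit] at hWx hW0
        exact ⟨⟨h1, by omega⟩, h2, by omega⟩
  · refine ⟨fun _ => false, ⟨hu, hi, fun _ => false, fun _ => false,
      fun _ _ _ => rfl, fun _ _ _ => rfl, fun x => rfl⟩, fun x => ?_⟩
    simp only [Bool.false_eq_true, false_iff]
    intro h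
    exact hex ⟨x, h⟩
end

section
/- Let (X1, X2) be a partition of X_n and let x and y be maximal matching assignments. If the mixed assignments (x|X1, y|X2) and (y|X1, x|X2) both have weight exactly 2^(2n) − 1 (with respect to the weights w_{i,j} = 2^(i−1) + 2^(n+j−1)), then both mixed assignments are maximal matching assignments. -/
/-- A maximal matching assignment: the assignment is an `n × n` permutation matrix. -/
def IsMaximalMatching (n : ℕ) (x : Fin n × Fin n → Bool) : Prop :=
  (∀ i : Fin n, ∃! j : Fin n, x (i, j) = true) ∧
  (∀ j : Fin n, ∃! i : Fin n, x (i, j) = true)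

/-- The mixed assignment agreeing with `x` on `X1` and with `y` outside `X1`. -/
def mix {n : ℕ} (X1 : Finset (Fin n × Fin n)) (x y : Fin n × Fin n → Bool) :
    Fin n × Fin n → Bool :=
  fun p => if p ∈ X1 then x p else y p

/-- Number of ones in row `i`. -/
def rcnt (n : ℕ) (z : Fin n × Fin n → Bool) (i : Fin n) : ℕ :=
  (Finset.univ.filter (fun j : Fin n => z (i, j) = true)).card

/-- Number of ones in column `j`. -/
def ccnt (n : ℕ) (z : Fin n × Fin n → Bool) (j : Fin n) : ℕ :=
  (Finset.univ.filter (fun i : Fin n => z (i, j) = true)).card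

lemma card_filter_eq_one_iff {α : Type*} [Fintype α] (p : α → Prop) [DecidablePred p] :
    (Finset.univ.filter p).card = 1 ↔ ∃! a, p a := by
  constructor
  · intro h
    obtain ⟨a, ha⟩ := Finset.card_eq_one.mp h
    refine ⟨a, ?_, ?_⟩
    · have : a ∈ Finset.univ.filter p := ha ▸ Finset.mem_singleton_self a
      exact (Finset.mem_filter.mp this).2
    · intro b hb
      have : b ∈ Finset.univ.filter p := Finset.mem_filter.mpr ⟨Finset.mem_univ b, hb⟩
      rw [ha, Finset.mem_singleton] at this
      exact this
  · rintro ⟨a, ha, hu⟩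
    rw [Finset.card_eq_one]
    refine ⟨a, ?_⟩
    ext b
    simp only [Finset.mem_filter, Finset.mem_univ, true_and, Finset.mem_singleton]
    exact ⟨fun h => hu b h, fun h => h ▸ ha⟩

lemma mm_iff (n : ℕ) (z : Fin n × Fin n → Bool) :
    IsMaximalMatching n z ↔ (∀ i, rcnt n z i = 1) ∧ (∀ j, ccnt n z j = 1) := by
  unfold IsMaximalMatching rcnt ccnt
  simp only [card_filter_eq_one_iff]

lemma pbWeight_eq (n : ℕ) (z : Fin n × Fin n → Bool) :
    pbWeight n z = (∑ i : Fin n, rcnt n z i * 2 ^ (i : ℕ)) +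
      ∑ j : Fin n, ccnt n z j * 2 ^ (n + (j : ℕ)) := by
  unfold pbWeight rcnt ccnt
  have h : ∀ p : Fin n × Fin n,
      (if z p = true then 2 ^ (p.1 : ℕ) + 2 ^ (n + (p.2 : ℕ)) else 0)
      = (if z p = true then 2 ^ (p.1 : ℕ) else 0)
        + (if z p = true then 2 ^ (n + (p.2 : ℕ)) else 0) := by
    intro p; split <;> simp
  rw [Finset.sum_congr rfl (fun p _ => h p), Finset.sum_add_distrib]
  congr 1
  · rw [Fintype.sum_prod_type]
    refine Finset.sum_congr rfl fun i _ => ?_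
    rw [← Finset.sum_filter]
    simp [Finset.sum_const, mul_comm]
  · rw [Fintype.sum_prod_type_right]
    refine Finset.sum_congr rfl fun j _ => ?_
    rw [← Finset.sum_filter]
    simp [Finset.sum_const, mul_comm]

lemma rcnt_mix_le (n : ℕ) (X1 : Finset (Fin n × Fin n)) (x y : Fin n × Fin n → Bool)
    (i : Fin n) : rcnt n (mix X1 x y) i ≤ rcnt n x i + rcnt n y i := by
  unfold rcnt
  refine le_trans (Finset.card_le_card ?_) (Finset.card_union_le _ _)
  intro j hj
  simp only [Finset.mem_filter, Finset.mem_univ, true_and, Finset.mem_union] at *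
  unfold mix at hj
  by_cases h : (i, j) ∈ X1
  · left; simpa [h] using hj
  · right; simpa [h] using hj

lemma ccnt_mix_le (n : ℕ) (X1 : Finset (Fin n × Fin n)) (x y : Fin n × Fin n → Bool)
    (j : Fin n) : ccnt n (mix X1 x y) j ≤ ccnt n x j + ccnt n y j := by
  unfold ccnt
  refine le_trans (Finset.card_le_card ?_) (Finset.card_union_le _ _)
  intro i hi
  simp only [Finset.mem_filter, Finset.mem_univ, true_and, Finset.mem_union] at *
  unfold mix at hi
  by_cases h : (i, j) ∈ X1
  · left; simpa [h] using hi
  · right; simpa [h] using hi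

/-- Uniqueness of base-2 representations of `2^m - 1` with digits at most `2`. -/
lemma digits_all_one : ∀ (m : ℕ) (d : ℕ → ℕ), (∀ k, k < m → d k ≤ 2) →
    (∑ k ∈ Finset.range m, d k * 2 ^ k) = 2 ^ m - 1 → ∀ k, k < m → d k = 1 := by
  intro m
  induction m with
  | zero => intro d _ _ k hk; omega
  | succ m ih =>
    intro d hd hsum k hk
    rw [Finset.sum_range_succ'] at hsum
    simp only [pow_zero, mul_one] at hsum
    have h2 : ∑ k ∈ Finset.range m, d (k + 1) * 2 ^ (k + 1)
        = 2 * ∑ k ∈ Finset.range m, d (k + 1) * 2 ^ k := by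
      rw [Finset.mul_sum]
      refine Finset.sum_congr rfl fun i _ => ?_
      ring
    rw [h2] at hsum
    have h2m : 2 ^ (m + 1) = 2 * 2 ^ m := by ring
    rw [h2m] at hsum
    have hd0 : d 0 ≤ 2 := hd 0 (Nat.succ_pos m)
    have hpm : 1 ≤ 2 ^ m := Nat.one_le_two_pow
    have hd0' : d 0 = 1 := by omega
    have hS : ∑ k ∈ Finset.range m, d (k + 1) * 2 ^ k = 2 ^ m - 1 := by omega
    have hall := ih (fun k => d (k + 1)) (fun k hk => hd (k + 1) (by omega)) hS
    rcases k with _ | k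
    · exact hd0'
    · exact hall k (by omega)

lemma key_lemma (n : ℕ) (z : Fin n × Fin n → Bool)
    (hw : pbWeight n z = 2 ^ (2 * n) - 1)
    (hr : ∀ i, rcnt n z i ≤ 2) (hc : ∀ j, ccnt n z j ≤ 2) :
    IsMaximalMatching n z := by
  set d : ℕ → ℕ := fun k =>
    if h : k < n then rcnt n z ⟨k, h⟩
    else if h2 : k - n < n then ccnt n z ⟨k - n, h2⟩ else 0 with hdd
  have e1 : ∑ k ∈ Finset.range n, d k * 2 ^ k = ∑ i : Fin n, rcnt n z i * 2 ^ (i : ℕ) := by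
    rw [Finset.sum_range fun k => d k * 2 ^ k]
    refine Finset.sum_congr rfl fun i _ => ?_
    have hi := i.isLt
    simp [hdd, hi]
  have e2 : ∑ k ∈ Finset.range n, d (n + k) * 2 ^ (n + k)
      = ∑ j : Fin n, ccnt n z j * 2 ^ (n + (j : ℕ)) := by
    rw [Finset.sum_range fun k => d (n + k) * 2 ^ (n + k)]
    refine Finset.sum_congr rfl fun j _ => ?_
    have h1 : ¬(n + (j : ℕ) < n) := by omega
    have h2 : n + (j : ℕ) - n = (j : ℕ) := by omega
    have hj := j.isLt
    simp [hdd, h1, h2, hj]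
  have hsum : ∑ k ∈ Finset.range (2 * n), d k * 2 ^ k = 2 ^ (2 * n) - 1 := by
    rw [two_mul, Finset.sum_range_add, e1, e2, ← pbWeight_eq, hw, two_mul]
  have hbound : ∀ k, k < 2 * n → d k ≤ 2 := by
    intro k hk
    by_cases h : k < n
    · simp only [hdd, dif_pos h]; exact hr _
    · have h2 : k - n < n := by omega
      simp only [hdd, dif_neg h, dif_pos h2]; exact hc _
  have hall := digits_all_one (2 * n) d hbound hsum
  rw [mm_iff]
  constructor
  · intro i
    have hi := i.isLt
    have := hall (i : ℕ) (by omega)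
    simpa [hdd, hi] using this
  · intro j
    have hj := j.isLt
    have := hall (n + (j : ℕ)) (by omega)
    have h1 : ¬(n + (j : ℕ) < n) := by omega
    have h2 : n + (j : ℕ) - n = (j : ℕ) := by omega
    simpa [hdd, h1, h2, hj] using this

theorem stmt5 (n : ℕ) (hn : 1 ≤ n) (X1 X2 : Finset (Fin n × Fin n))
    (hunion : X1 ∪ X2 = Finset.univ) (hinter : X1 ∩ X2 = ∅)
    (x y : Fin n × Fin n → Bool)
    (hx : IsMaximalMatching n x) (hy : IsMaximalMatching n y)
    (hxy : pbWeight n (mix X1 x y) = 2 ^ (2 * n) - 1)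
    (hyx : pbWeight n (mix X1 y x) = 2 ^ (2 * n) - 1) :
    IsMaximalMatching n (mix X1 x y) ∧ IsMaximalMatching n (mix X1 y x) := by
  obtain ⟨hxr, hxc⟩ := (mm_iff n x).mp hx
  obtain ⟨hyr, hyc⟩ := (mm_iff n y).mp hy
  constructor
  · refine key_lemma n _ hxy (fun i => ?_) (fun j => ?_)
    · calc rcnt n (mix X1 x y) i ≤ rcnt n x i + rcnt n y i := rcnt_mix_le n X1 x y i
        _ ≤ 2 := by rw [hxr i, hyr i]
    · calc ccnt n (mix X1 x y) j ≤ ccnt n x j + ccnt n y j := ccnt_mix_le n X1 x y j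
        _ ≤ 2 := by rw [hxc j, hyc j]
  · refine key_lemma n _ hyx (fun i => ?_) (fun j => ?_)
    · calc rcnt n (mix X1 y x) i ≤ rcnt n y i + rcnt n x i := rcnt_mix_le n X1 y x i
        _ ≤ 2 := by rw [hxr i, hyr i]
    · calc ccnt n (mix X1 y x) j ≤ ccnt n y j + ccnt n x j := ccnt_mix_le n X1 y x j
        _ ≤ 2 := by rw [hxc j, hyc j]
end

section
/- Let (X1, X2) be a partition of X_n and let x and y be maximal matching assignments. If the mixed assignment (x|X1, y|X2) has weight exactly 2^(2n) − 1 (with respect to the weights w_{i,j} = 2^(i−1) + 2^(n+j−1)), then (x|X1, y|X2) is a maximal matching assignment. -/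
lemma two_pow_digits : ∀ (n : ℕ) (r : ℕ → ℕ), (∀ i < n, r i ≤ 2) →
    (∑ i ∈ Finset.range n, r i * 2 ^ i = 2 ^ n - 1) → ∀ i < n, r i = 1 := by
  intro n
  induction n with
  | zero => intro r _ _ i hi; omega
  | succ n ih =>
    intro r hr hsum
    rw [Finset.sum_range_succ'] at hsum
    have h2 : ∑ i ∈ Finset.range n, r (i+1) * 2 ^ (i+1)
        = 2 * ∑ i ∈ Finset.range n, r (i+1) * 2 ^ i := by
      rw [Finset.mul_sum]; apply Finset.sum_congr rfl; intro i _; ring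
    have hp : 1 ≤ 2 ^ n := Nat.one_le_two_pow
    rw [h2, pow_succ] at hsum
    have h0 := hr 0 (Nat.succ_pos n)
    have hkey : r 0 = 1 ∧ ∑ i ∈ Finset.range n, r (i+1) * 2 ^ i = 2 ^ n - 1 := by
      simp only [pow_zero, mul_one] at hsum; omega
    have hind := ih (fun i => r (i+1)) (fun i hi => hr (i+1) (by omega)) hkey.2
    intro i hi
    cases i with
    | zero => exact hkey.1
    | succ k => exact hind k (by omega)

theorem stmt6 (n : ℕ) (hn : 1 ≤ n) (X1 X2 : Finset (Fin n × Fin n))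
    (hunion : X1 ∪ X2 = Finset.univ) (hinter : X1 ∩ X2 = ∅)
    (x y : Fin n × Fin n → Bool)
    (hx : IsMaximalMatching n x) (hy : IsMaximalMatching n y)
    (hxy : pbWeight n (mix X1 x y) = 2 ^ (2 * n) - 1) :
    IsMaximalMatching n (mix X1 x y) := by
  classical
  set z := mix X1 x y with hzdef
  have hzor : ∀ p, z p = true → x p = true ∨ y p = true := by
    intro p hp
    by_cases h : p ∈ X1
    · left; simpa [hzdef, mix, h] using hp
    · right; simpa [hzdef, mix, h] using hp
  set R : Fin n → Finset (Fin n) :=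
    fun i => Finset.univ.filter (fun j => z (i, j) = true) with hR
  set C : Fin n → Finset (Fin n) :=
    fun j => Finset.univ.filter (fun i => z (i, j) = true) with hC
  have hRle : ∀ i, (R i).card ≤ 2 := by
    intro i
    obtain ⟨jx, hjx, hjxu⟩ := hx.1 i
    obtain ⟨jy, hjy, hjyu⟩ := hy.1 i
    have hsub : R i ⊆ {jx, jy} := by
      intro j hj
      simp only [hR, Finset.mem_filter, Finset.mem_univ, true_and] at hj
      rcases hzor _ hj with h | h
      · simp [hjxu j h]
      · simp [hjyu j h]
    exact (Finset.card_le_card hsub).trans ((Finset.card_insert_le _ _).trans (by simp))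
  have hCle : ∀ j, (C j).card ≤ 2 := by
    intro j
    obtain ⟨ix, hix, hixu⟩ := hx.2 j
    obtain ⟨iy, hiy, hiyu⟩ := hy.2 j
    have hsub : C j ⊆ {ix, iy} := by
      intro i hi
      simp only [hC, Finset.mem_filter, Finset.mem_univ, true_and] at hi
      rcases hzor _ hi with h | h
      · simp [hixu i h]
      · simp [hiyu i h]
    exact (Finset.card_le_card hsub).trans ((Finset.card_insert_le _ _).trans (by simp))
  -- weight decomposition
  have hw : pbWeight n z = (∑ i : Fin n, (R i).card * 2 ^ (i : ℕ))
      + 2 ^ n * (∑ j : Fin n, (C j).card * 2 ^ (j : ℕ)) := by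
    unfold pbWeight
    rw [Fintype.sum_prod_type]
    have hsplit : ∀ (i j : Fin n),
        (if z (i, j) = true then 2 ^ (i : ℕ) + 2 ^ (n + (j : ℕ)) else 0)
        = (if z (i, j) = true then 2 ^ (i : ℕ) else 0)
          + (if z (i, j) = true then 2 ^ (n + (j : ℕ)) else 0) := by
      intro i j; split <;> simp
    simp_rw [hsplit, Finset.sum_add_distrib]
    congr 1
    · apply Finset.sum_congr rfl
      intro i _
      rw [← Finset.sum_filter, Finset.sum_const, smul_eq_mul]
    · rw [Finset.sum_comm, Finset.mul_sum]
      apply Finset.sum_congr rfl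
      intro j _
      rw [← Finset.sum_filter, Finset.sum_const, smul_eq_mul, pow_add]
      ring
  set A := ∑ i : Fin n, (R i).card * 2 ^ (i : ℕ) with hA
  set B := ∑ j : Fin n, (C j).card * 2 ^ (j : ℕ) with hB
  set P := 2 ^ n with hP
  have hP2 : 2 ≤ P := by
    rw [hP]
    calc 2 = 2 ^ 1 := rfl
    _ ≤ 2 ^ n := Nat.pow_le_pow_right (by norm_num) hn
  have hgeom : ∀ m : ℕ, ∑ i ∈ Finset.range m, 2 ^ i = 2 ^ m - 1 := by
    intro m
    induction m with
    | zero => simp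
    | succ m ih =>
      have : 1 ≤ 2 ^ m := Nat.one_le_two_pow
      rw [Finset.sum_range_succ, ih, pow_succ]; omega
  have hfin : ∑ i : Fin n, 2 ^ (i : ℕ) = P - 1 := by
    rw [hP, ← hgeom n, Fin.sum_univ_eq_sum_range (fun k => 2 ^ k) n]
  have hAle : A + 2 ≤ 2 * P := by
    have h1 : A ≤ ∑ i : Fin n, 2 * 2 ^ (i : ℕ) := by
      apply Finset.sum_le_sum
      intro i _
      exact Nat.mul_le_mul_right _ (hRle i)
    rw [← Finset.mul_sum, hfin] at h1
    omega
  have hBle : B + 2 ≤ 2 * P := by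
    have h1 : B ≤ ∑ j : Fin n, 2 * 2 ^ (j : ℕ) := by
      apply Finset.sum_le_sum
      intro j _
      exact Nat.mul_le_mul_right _ (hCle j)
    rw [← Finset.mul_sum, hfin] at h1
    omega
  have hPP : 2 ^ (2 * n) = P * P := by rw [hP, two_mul, pow_add]
  have hAB : A + P * B + 1 = P * P := by
    have h1 : A + P * B = 2 ^ (2 * n) - 1 := by rw [← hw, hxy]
    have h2 : 1 ≤ 2 ^ (2 * n) := Nat.one_le_two_pow
    rw [hPP] at h1 h2
    omega
  -- deduce A = P - 1 and B = P - 1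
  have hBval : B = P - 1 := by
    have hlt : B < P := by
      have : P * B < P * P := by
        have : P * B ≤ A + P * B := Nat.le_add_left _ _
        omega
      exact Nat.lt_of_mul_lt_mul_left this
    have hge : ¬ (B + 2 ≤ P) := by
      intro h
      have hm : P * (B + 2) ≤ P * P := Nat.mul_le_mul_left P h
      have he : P * (B + 2) = P * B + 2 * P := by ring
      omega
    omega
  have hAval : A = P - 1 := by
    rw [hBval] at hAB
    have he : P * (P - 1) + P = P * P := by
      have h1 : P - 1 + 1 = P := by omega
      calc P * (P - 1) + P = P * ((P - 1) + 1) := by ring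
      _ = P * P := by rw [h1]
    omega
  -- digit lemma applications
  have hRone : ∀ i : Fin n, (R i).card = 1 := by
    set rF : ℕ → ℕ := fun k => if h : k < n then (R ⟨k, h⟩).card else 0 with hrF
    have hsum : ∑ k ∈ Finset.range n, rF k * 2 ^ k = 2 ^ n - 1 := by
      rw [← Fin.sum_univ_eq_sum_range (fun k => rF k * 2 ^ k) n]
      have : ∀ i : Fin n, rF (i : ℕ) * 2 ^ (i : ℕ) = (R i).card * 2 ^ (i : ℕ) := by
        intro i; simp [hrF, i.isLt]
      rw [Finset.sum_congr rfl (fun i _ => this i)]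
      rw [← hA, hAval, hP]
    have hbd : ∀ k < n, rF k ≤ 2 := by
      intro k hk; simp only [hrF, dif_pos hk]; exact hRle _
    have := two_pow_digits n rF hbd hsum
    intro i
    have h := this (i : ℕ) i.isLt
    simpa [hrF, i.isLt] using h
  have hCone : ∀ j : Fin n, (C j).card = 1 := by
    set cF : ℕ → ℕ := fun k => if h : k < n then (C ⟨k, h⟩).card else 0 with hcF
    have hsum : ∑ k ∈ Finset.range n, cF k * 2 ^ k = 2 ^ n - 1 := by
      rw [← Fin.sum_univ_eq_sum_range (fun k => cF k * 2 ^ k) n]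
      have : ∀ j : Fin n, cF (j : ℕ) * 2 ^ (j : ℕ) = (C j).card * 2 ^ (j : ℕ) := by
        intro j; simp [hcF, j.isLt]
      rw [Finset.sum_congr rfl (fun j _ => this j)]
      rw [← hB, hBval, hP]
    have hbd : ∀ k < n, cF k ≤ 2 := by
      intro k hk; simp only [hcF, dif_pos hk]; exact hCle _
    have := two_pow_digits n cF hbd hsum
    intro j
    have h := this (j : ℕ) j.isLt
    simpa [hcF, j.isLt] using h
  constructor
  · intro i
    obtain ⟨a, ha⟩ := Finset.card_eq_one.mp (hRone i)
    refine ⟨a, ?_, ?_⟩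
    · have : a ∈ R i := by rw [ha]; exact Finset.mem_singleton_self a
      simpa [hR] using this
    · intro j hj
      have : j ∈ R i := by simp [hR, hj]
      rw [ha, Finset.mem_singleton] at this
      exact this
  · intro j
    obtain ⟨a, ha⟩ := Finset.card_eq_one.mp (hCone j)
    refine ⟨a, ?_, ?_⟩
    · have : a ∈ C j := by rw [ha]; exact Finset.mem_singleton_self a
      simpa [hC] using this
    · intro i hi
      have : i ∈ C j := by simp [hC, hi]
      rw [ha, Finset.mem_singleton] at this
      exact this
end

section
/- For every n ≥ 1, C(f_n) ≥ C(f̂_n): the minimum size of a balanced rectangle cover of the pseudo-Boolean constraint f_n is at least the minimum size of a balanced rectangle cover of the function f̂_n whose models are exactly the maximal matching assignments. -/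
open Classical in
/-- The Boolean function `f̂_n` whose models are exactly the maximal matching assignments. -/
noncomputable def fMM (n : ℕ) (x : Fin n × Fin n → Bool) : Bool :=
  decide (IsMaximalMatching n x)

lemma sum_range_pow2 (n : ℕ) : ∑ i ∈ Finset.range n, 2 ^ i = 2 ^ n - 1 := by
  induction n with
  | zero => simp
  | succ n ih =>
    have hp : 0 < 2 ^ n := pow_pos (by norm_num) n
    rw [Finset.sum_range_succ, ih, pow_succ]
    omega

lemma digit_one (n : ℕ) : ∀ r : ℕ → ℕ, (∀ i, i < n → r i ≤ 2) →
    (∑ i ∈ Finset.range n, r i * 2 ^ i) = 2 ^ n - 1 → ∀ i, i < n → r i = 1 := by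
  induction n with
  | zero => intro r _ _ i hi; omega
  | succ n ih =>
    intro r hb hs i hi
    rw [Finset.sum_range_succ'] at hs
    have hE : ∑ i ∈ Finset.range n, r (i + 1) * 2 ^ (i + 1)
        = 2 * ∑ i ∈ Finset.range n, r (i + 1) * 2 ^ i := by
      rw [Finset.mul_sum]; exact Finset.sum_congr rfl fun i _ => by ring
    rw [hE, pow_succ, pow_zero] at hs
    have hp : 0 < 2 ^ n := pow_pos (by norm_num) n
    have hr0 : r 0 ≤ 2 := hb 0 (Nat.succ_pos n)
    have key : r 0 = 1 ∧ (∑ i ∈ Finset.range n, r (i + 1) * 2 ^ i) = 2 ^ n - 1 := by omega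
    match i with
    | 0 => exact key.1
    | Nat.succ k =>
      exact ih (fun k => r (k + 1)) (fun k hk => hb (k + 1) (by omega)) key.2 k (by omega)

lemma sum_pow_fin (n : ℕ) : ∑ i : Fin n, 2 ^ (i : ℕ) = 2 ^ n - 1 := by
  rw [Fin.sum_univ_eq_sum_range (fun k => 2 ^ k) n]; exact sum_range_pow2 n

lemma digit_one_fin (n : ℕ) (r : Fin n → ℕ) (hb : ∀ i, r i ≤ 2)
    (hs : ∑ i : Fin n, r i * 2 ^ (i : ℕ) = 2 ^ n - 1) : ∀ i, r i = 1 := by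
  classical
  set g : ℕ → ℕ := fun k => if h : k < n then r ⟨k, h⟩ else 0 with hg
  have h1 : ∑ i : Fin n, r i * 2 ^ (i : ℕ) = ∑ k ∈ Finset.range n, g k * 2 ^ k := by
    rw [← Fin.sum_univ_eq_sum_range (fun k => g k * 2 ^ k) n]
    exact Finset.sum_congr rfl fun i _ => by simp [g, i.isLt]
  have hd := digit_one n g (fun k hk => by simpa [g, hk] using hb ⟨k, hk⟩) (by rw [← h1, hs])
  intro i
  have := hd i i.isLt
  simpa [g, i.isLt] using this

lemma pbWeight_decomp (n : ℕ) (x : Fin n × Fin n → Bool) :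
    pbWeight n x
      = (∑ i : Fin n, (Finset.univ.filter fun j => x (i, j) = true).card * 2 ^ (i : ℕ))
        + 2 ^ n * (∑ j : Fin n, (Finset.univ.filter fun i => x (i, j) = true).card * 2 ^ (j : ℕ)) := by
  unfold pbWeight
  have split : ∀ p : Fin n × Fin n,
      (if x p = true then 2 ^ (p.1 : ℕ) + 2 ^ (n + (p.2 : ℕ)) else 0)
        = (if x p = true then 2 ^ (p.1 : ℕ) else 0)
          + (if x p = true then 2 ^ (n + (p.2 : ℕ)) else 0) := by
    intro p; by_cases h : x p = true <;> simp [h]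
  rw [Finset.sum_congr rfl fun p _ => split p, Finset.sum_add_distrib]
  congr 1
  · rw [Fintype.sum_prod_type]
    refine Finset.sum_congr rfl fun i _ => ?_
    rw [← Finset.sum_filter]
    simp [Finset.sum_const, smul_eq_mul]
  · rw [Fintype.sum_prod_type_right, Finset.mul_sum]
    refine Finset.sum_congr rfl fun j _ => ?_
    rw [← Finset.sum_filter]
    simp only [Finset.sum_const, smul_eq_mul, pow_add]
    ring

lemma row_card_one {n : ℕ} {y : Fin n × Fin n → Bool} (h : IsMaximalMatching n y) (i : Fin n) :
    (Finset.univ.filter fun j => y (i, j) = true).card = 1 := by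
  obtain ⟨j0, hj0, hun⟩ := h.1 i
  rw [Finset.card_eq_one]
  refine ⟨j0, ?_⟩
  ext j
  simp only [Finset.mem_filter, Finset.mem_univ, true_and, Finset.mem_singleton]
  exact ⟨fun hj => hun j hj, fun hj => hj ▸ hj0⟩

lemma col_card_one {n : ℕ} {y : Fin n × Fin n → Bool} (h : IsMaximalMatching n y) (j : Fin n) :
    (Finset.univ.filter fun i => y (i, j) = true).card = 1 := by
  obtain ⟨i0, hi0, hun⟩ := h.2 j
  rw [Finset.card_eq_one]
  refine ⟨i0, ?_⟩
  ext i
  simp only [Finset.mem_filter, Finset.mem_univ, true_and, Finset.mem_singleton]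
  exact ⟨fun hi => hun i hi, fun hi => hi ▸ hi0⟩

lemma matching_weight {n : ℕ} {y : Fin n × Fin n → Bool} (h : IsMaximalMatching n y) :
    pbWeight n y = 2 ^ (2 * n) - 1 := by
  rw [pbWeight_decomp]
  have e1 : ∑ i : Fin n, (Finset.univ.filter fun j => y (i, j) = true).card * 2 ^ (i : ℕ)
      = 2 ^ n - 1 := by
    rw [Finset.sum_congr rfl fun i _ => by rw [row_card_one h i, one_mul]]
    exact sum_pow_fin n
  have e2 : ∑ j : Fin n, (Finset.univ.filter fun i => y (i, j) = true).card * 2 ^ (j : ℕ)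
      = 2 ^ n - 1 := by
    rw [Finset.sum_congr rfl fun j _ => by rw [col_card_one h j, one_mul]]
    exact sum_pow_fin n
  rw [e1, e2]
  have hp : 1 ≤ 2 ^ n := Nat.one_le_two_pow
  have h2n : 2 ^ (2 * n) = 2 ^ n * 2 ^ n := by rw [two_mul, pow_add]
  have hpp : 1 ≤ 2 ^ n * 2 ^ n := Nat.one_le_iff_ne_zero.mpr (by positivity)
  rw [h2n]
  zify [hp, hpp]
  ring

lemma weight_eq_matching {n : ℕ} (hn : 1 ≤ n) {x : Fin n × Fin n → Bool}
    (hrow : ∀ i : Fin n, (Finset.univ.filter fun j => x (i, j) = true).card ≤ 2)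
    (hcol : ∀ j : Fin n, (Finset.univ.filter fun i => x (i, j) = true).card ≤ 2)
    (hw : pbWeight n x = 2 ^ (2 * n) - 1) : IsMaximalMatching n x := by
  rw [pbWeight_decomp] at hw
  set A := ∑ i : Fin n, (Finset.univ.filter fun j => x (i, j) = true).card * 2 ^ (i : ℕ) with hA
  set B := ∑ j : Fin n, (Finset.univ.filter fun i => x (i, j) = true).card * 2 ^ (j : ℕ) with hB
  set P := 2 ^ n with hPdef
  have hP2 : 2 ≤ P := by
    calc (2 : ℕ) = 2 ^ 1 := rfl
    _ ≤ 2 ^ n := Nat.pow_le_pow_right (by norm_num) hn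
  have hA2 : A ≤ 2 * P - 2 := by
    have h1 : A ≤ ∑ i : Fin n, 2 * 2 ^ (i : ℕ) :=
      Finset.sum_le_sum fun i _ => Nat.mul_le_mul_right _ (hrow i)
    have h2 : ∑ i : Fin n, 2 * 2 ^ (i : ℕ) = 2 * (P - 1) := by
      rw [← Finset.mul_sum, sum_pow_fin]
    omega
  have hB2 : B ≤ 2 * P - 2 := by
    have h1 : B ≤ ∑ j : Fin n, 2 * 2 ^ (j : ℕ) :=
      Finset.sum_le_sum fun j _ => Nat.mul_le_mul_right _ (hcol j)
    have h2 : ∑ j : Fin n, 2 * 2 ^ (j : ℕ) = 2 * (P - 1) := by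
      rw [← Finset.mul_sum, sum_pow_fin]
    omega
  have h2n : 2 ^ (2 * n) = P * P := by rw [two_mul, pow_add]
  rw [h2n] at hw
  have hPP : P ≤ P * P := Nat.le_mul_of_pos_left P (by omega)
  have hBeq : B = P - 1 := by
    by_contra hne
    have hBlt : B < P := by
      by_contra h
      push_neg at h
      have : P * P ≤ P * B := Nat.mul_le_mul_left P h
      omega
    have hb2 : B ≤ P - 2 := by omega
    have hmul : P * B ≤ P * (P - 2) := Nat.mul_le_mul_left P hb2
    have e2 : P * (P - 2) + P * 2 = P * P := by
      rw [← mul_add, Nat.sub_add_cancel hP2]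
    omega
  have hAeq : A = P - 1 := by
    have e1 : P * (P - 1) + P * 1 = P * P := by
      rw [← mul_add, Nat.sub_add_cancel (by omega : 1 ≤ P)]
    rw [hBeq] at hw
    omega
  constructor
  · intro i
    have h1 := digit_one_fin n
      (fun i => (Finset.univ.filter fun j => x (i, j) = true).card) hrow hAeq i
    obtain ⟨j0, hj0⟩ := Finset.card_eq_one.mp h1
    refine ⟨j0, ?_, ?_⟩
    · have : j0 ∈ Finset.univ.filter fun j => x (i, j) = true :=
        hj0 ▸ Finset.mem_singleton_self j0
      exact (Finset.mem_filter.mp this).2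
    · intro j hj
      have : j ∈ Finset.univ.filter fun j => x (i, j) = true :=
        Finset.mem_filter.mpr ⟨Finset.mem_univ _, hj⟩
      rw [hj0] at this
      exact Finset.mem_singleton.mp this
  · intro j
    have h1 := digit_one_fin n
      (fun j => (Finset.univ.filter fun i => x (i, j) = true).card) hcol hBeq j
    obtain ⟨i0, hi0⟩ := Finset.card_eq_one.mp h1
    refine ⟨i0, ?_, ?_⟩
    · have : i0 ∈ Finset.univ.filter fun i => x (i, j) = true :=
        hi0 ▸ Finset.mem_singleton_self i0
      exact (Finset.mem_filter.mp this).2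
    · intro i hi
      have : i ∈ Finset.univ.filter fun i => x (i, j) = true :=
        Finset.mem_filter.mpr ⟨Finset.mem_univ _, hi⟩
      rw [hi0] at this
      exact Finset.mem_singleton.mp this

lemma pbWeight_mix (n : ℕ) (X1 : Finset (Fin n × Fin n)) (y1 y2 : Fin n × Fin n → Bool) :
    pbWeight n (fun v => if v ∈ X1 then y1 v else y2 v)
      + pbWeight n (fun v => if v ∈ X1 then y2 v else y1 v)
    = pbWeight n y1 + pbWeight n y2 := by
  unfold pbWeight
  rw [← Finset.sum_add_distrib, ← Finset.sum_add_distrib]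
  refine Finset.sum_congr rfl fun p _ => ?_
  by_cases h : p ∈ X1
  · simp [h]
  · simp [h, Nat.add_comm]

lemma mix_row_le_two {n : ℕ} {X1 : Finset (Fin n × Fin n)} {y1 y2 x : Fin n × Fin n → Bool}
    (hx : ∀ v, x v = if v ∈ X1 then y1 v else y2 v)
    (h1 : IsMaximalMatching n y1) (h2 : IsMaximalMatching n y2) (i : Fin n) :
    (Finset.univ.filter fun j => x (i, j) = true).card ≤ 2 := by
  have hsub : (Finset.univ.filter fun j => x (i, j) = true)
      ⊆ (Finset.univ.filter fun j => y1 (i, j) = true)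
        ∪ (Finset.univ.filter fun j => y2 (i, j) = true) := by
    intro j hj
    have hxj := (Finset.mem_filter.mp hj).2
    rw [hx (i, j)] at hxj
    by_cases h : (i, j) ∈ X1
    · rw [if_pos h] at hxj
      exact Finset.mem_union_left _ (Finset.mem_filter.mpr ⟨Finset.mem_univ _, hxj⟩)
    · rw [if_neg h] at hxj
      exact Finset.mem_union_right _ (Finset.mem_filter.mpr ⟨Finset.mem_univ _, hxj⟩)
  calc (Finset.univ.filter fun j => x (i, j) = true).card
      ≤ _ := Finset.card_le_card hsub
    _ ≤ _ + _ := Finset.card_union_le _ _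
    _ ≤ 2 := by rw [row_card_one h1 i, row_card_one h2 i]

lemma mix_col_le_two {n : ℕ} {X1 : Finset (Fin n × Fin n)} {y1 y2 x : Fin n × Fin n → Bool}
    (hx : ∀ v, x v = if v ∈ X1 then y1 v else y2 v)
    (h1 : IsMaximalMatching n y1) (h2 : IsMaximalMatching n y2) (j : Fin n) :
    (Finset.univ.filter fun i => x (i, j) = true).card ≤ 2 := by
  have hsub : (Finset.univ.filter fun i => x (i, j) = true)
      ⊆ (Finset.univ.filter fun i => y1 (i, j) = true)
        ∪ (Finset.univ.filter fun i => y2 (i, j) = true) := by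
    intro i hi
    have hxi := (Finset.mem_filter.mp hi).2
    rw [hx (i, j)] at hxi
    by_cases h : (i, j) ∈ X1
    · rw [if_pos h] at hxi
      exact Finset.mem_union_left _ (Finset.mem_filter.mpr ⟨Finset.mem_univ _, hxi⟩)
    · rw [if_neg h] at hxi
      exact Finset.mem_union_right _ (Finset.mem_filter.mpr ⟨Finset.mem_univ _, hxi⟩)
  calc (Finset.univ.filter fun i => x (i, j) = true).card
      ≤ _ := Finset.card_le_card hsub
    _ ≤ _ + _ := Finset.card_union_le _ _
    _ ≤ 2 := by rw [col_card_one h1 j, col_card_one h2 j]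

/-- Key combinatorial lemma: if `x` is a mix of two maximal matchings and both mixes
have weight at least `2^(2n) - 1`, then `x` is itself a maximal matching. -/
lemma mix_matching {n : ℕ} (hn : 1 ≤ n) {X1 : Finset (Fin n × Fin n)}
    {y1 y2 x : Fin n × Fin n → Bool}
    (hx : ∀ v, x v = if v ∈ X1 then y1 v else y2 v)
    (h1 : IsMaximalMatching n y1) (h2 : IsMaximalMatching n y2)
    (hwx : 2 ^ (2 * n) - 1 ≤ pbWeight n x)
    (hwz : 2 ^ (2 * n) - 1 ≤ pbWeight n (fun v => if v ∈ X1 then y2 v else y1 v)) :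
    IsMaximalMatching n x := by
  have hxe : x = fun v => if v ∈ X1 then y1 v else y2 v := funext hx
  have hsum : pbWeight n x + pbWeight n (fun v => if v ∈ X1 then y2 v else y1 v)
      = pbWeight n y1 + pbWeight n y2 := by
    rw [hxe]; exact pbWeight_mix n X1 y1 y2
  rw [matching_weight h1, matching_weight h2] at hsum
  have hweq : pbWeight n x = 2 ^ (2 * n) - 1 := by omega
  exact weight_eq_matching hn (mix_row_le_two hx h1 h2) (mix_col_le_two hx h1 h2) hweq

theorem stmt8 (n : ℕ) (hn : 1 ≤ n)
    (L : List ((Fin n × Fin n → Bool) → Bool))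
    (hL : IsBalancedRectangleCover L (fPB n)) :
    ∃ L' : List ((Fin n × Fin n → Bool) → Bool),
      IsBalancedRectangleCover L' (fMM n) ∧ L'.length ≤ L.length := by
  classical
  obtain ⟨hrect, hcov⟩ := hL
  refine ⟨L.map (fun r z => r z && fMM n z), ⟨?_, ?_⟩, by simp⟩
  · intro r' hr'
    rw [List.mem_map] at hr'
    obtain ⟨r, hrL, rfl⟩ := hr'
    obtain ⟨X1, X2, ⟨hU, hI, ρ1, ρ2, hd1, hd2, hrho⟩, hb1, hb2⟩ := hrect r hrL
    refine ⟨X1, X2, ⟨hU, hI,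
      fun z => decide (∃ y, (r y && fMM n y) = true ∧ ∀ v ∈ X1, y v = z v),
      fun z => decide (∃ y, (r y && fMM n y) = true ∧ ∀ v ∈ X2, y v = z v), ?_, ?_, ?_⟩,
      hb1, hb2⟩
    · intro a b hab
      simp only [decide_eq_decide]
      constructor
      · rintro ⟨y, hy1, hy2⟩
        exact ⟨y, hy1, fun v hv => (hy2 v hv).trans (hab v hv)⟩
      · rintro ⟨y, hy1, hy2⟩
        exact ⟨y, hy1, fun v hv => (hy2 v hv).trans (hab v hv).symm⟩
    · intro a b hab
      simp only [decide_eq_decide]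
      constructor
      · rintro ⟨y, hy1, hy2⟩
        exact ⟨y, hy1, fun v hv => (hy2 v hv).trans (hab v hv)⟩
      · rintro ⟨y, hy1, hy2⟩
        exact ⟨y, hy1, fun v hv => (hy2 v hv).trans (hab v hv).symm⟩
    · intro z
      rw [Bool.eq_iff_iff]
      constructor
      · intro hz
        exact Bool.and_eq_true_iff.mpr
          ⟨decide_eq_true ⟨z, hz, fun v _ => rfl⟩, decide_eq_true ⟨z, hz, fun v _ => rfl⟩⟩
      · intro hz
        obtain ⟨hz1, hz2⟩ := Bool.and_eq_true_iff.mp hz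
        obtain ⟨y1, hy1r, hy1a⟩ := of_decide_eq_true hz1
        obtain ⟨y2, hy2r, hy2a⟩ := of_decide_eq_true hz2
        obtain ⟨hry1, hm1b⟩ := Bool.and_eq_true_iff.mp hy1r
        obtain ⟨hry2, hm2b⟩ := Bool.and_eq_true_iff.mp hy2r
        simp only [fMM, decide_eq_true_eq] at hm1b hm2b
        have hmemX2 : ∀ v : Fin n × Fin n, v ∉ X1 → v ∈ X2 := by
          intro v hv
          have hvu : v ∈ X1 ∪ X2 := hU ▸ Finset.mem_univ v
          rcases Finset.mem_union.mp hvu with h | h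
          · exact absurd h hv
          · exact h
        have hdisj : ∀ v ∈ X2, v ∉ X1 := by
          intro v hv2 hv1
          have hvi : v ∈ X1 ∩ X2 := Finset.mem_inter.mpr ⟨hv1, hv2⟩
          rw [hI] at hvi
          exact absurd hvi (Finset.notMem_empty v)
        have hzmix : ∀ v, z v = if v ∈ X1 then y1 v else y2 v := by
          intro v
          by_cases h : v ∈ X1
          · rw [if_pos h]; exact (hy1a v h).symm
          · rw [if_neg h]; exact (hy2a v (hmemX2 v h)).symm
        rw [hrho] at hry1 hry2
        obtain ⟨h11, h12⟩ := Bool.and_eq_true_iff.mp hry1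
        obtain ⟨h21, h22⟩ := Bool.and_eq_true_iff.mp hry2
        have hrz : r z = true := by
          rw [hrho, hd1 z y1 (fun v hv => (hy1a v hv).symm),
            hd2 z y2 (fun v hv => (hy2a v hv).symm), h11, h22]
          rfl
        have hrz2 : r (fun v => if v ∈ X1 then y2 v else y1 v) = true := by
          rw [hrho,
            hd1 (fun v => if v ∈ X1 then y2 v else y1 v) y2
              (fun v hv => by simp only [if_pos hv]),
            hd2 (fun v => if v ∈ X1 then y2 v else y1 v) y1
              (fun v hv => by simp only [if_neg (hdisj v hv)]),
            h21, h12]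
          rfl
        have hfz : 2 ^ (2 * n) - 1 ≤ pbWeight n z := by
          have h := (hcov z).mpr ⟨r, hrL, hrz⟩
          simpa [fPB, decide_eq_true_eq] using h
        have hfz2 : 2 ^ (2 * n) - 1
            ≤ pbWeight n (fun v => if v ∈ X1 then y2 v else y1 v) := by
          have h := (hcov _).mpr ⟨r, hrL, hrz2⟩
          simpa [fPB, decide_eq_true_eq] using h
        have hmm : IsMaximalMatching n z := mix_matching hn hzmix hm1b hm2b hfz hfz2
        exact Bool.and_eq_true_iff.mpr ⟨hrz, by simp only [fMM, decide_eq_true_eq]; exact hmm⟩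
  · intro z
    constructor
    · intro hz
      have hmm : IsMaximalMatching n z := by
        simpa [fMM, decide_eq_true_eq] using hz
      have hw := matching_weight hmm
      have hf : fPB n z = true := by
        simp [fPB, decide_eq_true_eq, hw]
      obtain ⟨r, hrL, hrz⟩ := (hcov z).mp hf
      exact ⟨fun w => r w && fMM n w, List.mem_map.mpr ⟨r, hrL, rfl⟩,
        Bool.and_eq_true_iff.mpr ⟨hrz, hz⟩⟩
    · rintro ⟨r', hr', hz⟩
      rw [List.mem_map] at hr'
      obtain ⟨r, hrL, rfl⟩ := hr'
      exact (Bool.and_eq_true_iff.mp hz).2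
end

section
/- Let r be a rectangle with respect to a partition (X1, X2) of X_n such that every model of r is a threshold model of f_n, i.e., every model x of r satisfies Σ_{1≤i,j≤n} w_{i,j}·x_{i,j} = 2^(2n) − 1. Then there exists a rectangle r̂ with respect to the same partition (X1, X2) whose models are exactly the maximal matching assignments accepted by r. -/
private lemma sum_two_pow' (n : ℕ) : ∑ k ∈ Finset.range n, 2 ^ k = 2 ^ n - 1 := by
  induction n with
  | zero => simp
  | succ m ih =>
    rw [Finset.sum_range_succ, ih]
    have : 1 ≤ 2 ^ m := Nat.one_le_two_pow
    have : 2 ^ (m + 1) = 2 * 2 ^ m := by ring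
    omega

private lemma bin_unique : ∀ (m : ℕ) (b b' : ℕ → ℕ), (∀ k, b k ≤ 1) → (∀ k, b' k ≤ 1) →
    (∑ k ∈ Finset.range m, b k * 2 ^ k) = (∑ k ∈ Finset.range m, b' k * 2 ^ k) →
    ∀ k < m, b k = b' k := by
  intro m
  induction m with
  | zero => intro b b' _ _ _ k hk; omega
  | succ m ih =>
    intro b b' hb hb' hsum k hk
    rw [Finset.sum_range_succ', Finset.sum_range_succ'] at hsum
    have e : ∀ (c : ℕ → ℕ), (∑ k ∈ Finset.range m, c (k + 1) * 2 ^ (k + 1)) =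
        2 * ∑ k ∈ Finset.range m, c (k + 1) * 2 ^ k := by
      intro c; rw [Finset.mul_sum]; exact Finset.sum_congr rfl fun k _ => by ring
    rw [e b, e b'] at hsum
    simp only [pow_zero, mul_one] at hsum
    have hb0 := hb 0; have hb'0 := hb' 0
    obtain ⟨h0, hS⟩ : b 0 = b' 0 ∧ (∑ k ∈ Finset.range m, b (k + 1) * 2 ^ k) =
        (∑ k ∈ Finset.range m, b' (k + 1) * 2 ^ k) := by omega
    match k, hk with
    | 0, _ => exact h0
    | (k' + 1), hk =>
      exact ih (fun k => b (k + 1)) (fun k => b' (k + 1)) (fun k => hb _) (fun k => hb' _)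
        hS k' (by omega)

private lemma add_pow_cancel {m a a' d d' : ℕ} (h : a + m * d = a' + m * d')
    (ha : a < m) (ha' : a' < m) : a = a' ∧ d = d' := by
  have h1 : (a + m * d) % m = a := by
    rw [Nat.add_mul_mod_self_left, Nat.mod_eq_of_lt ha]
  have h2 : (a' + m * d') % m = a' := by
    rw [Nat.add_mul_mod_self_left, Nat.mod_eq_of_lt ha']
  have haa : a = a' := by rw [← h1, ← h2, h]
  refine ⟨haa, ?_⟩
  subst haa
  have : m * d = m * d' := by omega
  exact Nat.eq_of_mul_eq_mul_left (by omega) this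

private def wIn (n : ℕ) (S : Finset (Fin n × Fin n)) (x : Fin n × Fin n → Bool) : ℕ :=
  ∑ p ∈ S, if x p = true then 2 ^ (p.1 : ℕ) + 2 ^ (n + (p.2 : ℕ)) else 0

private def rowCnt {n : ℕ} (S : Finset (Fin n × Fin n)) (x : Fin n × Fin n → Bool)
    (i : Fin n) : ℕ :=
  (S.filter (fun p => x p = true ∧ p.1 = i)).card

private def colCnt {n : ℕ} (S : Finset (Fin n × Fin n)) (x : Fin n × Fin n → Bool)
    (j : Fin n) : ℕ :=
  (S.filter (fun p => x p = true ∧ p.2 = j)).card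

private lemma wIn_congr {n : ℕ} {S : Finset (Fin n × Fin n)} {x y : Fin n × Fin n → Bool}
    (h : ∀ p ∈ S, x p = y p) : wIn n S x = wIn n S y :=
  Finset.sum_congr rfl fun p hp => by rw [h p hp]

private lemma rowCnt_congr {n : ℕ} {S : Finset (Fin n × Fin n)} {x y : Fin n × Fin n → Bool}
    (h : ∀ p ∈ S, x p = y p) (i : Fin n) : rowCnt S x i = rowCnt S y i := by
  unfold rowCnt
  congr 1
  apply Finset.filter_congr
  intro p hp
  rw [h p hp]

private lemma colCnt_congr {n : ℕ} {S : Finset (Fin n × Fin n)} {x y : Fin n × Fin n → Bool}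
    (h : ∀ p ∈ S, x p = y p) (j : Fin n) : colCnt S x j = colCnt S y j := by
  unfold colCnt
  congr 1
  apply Finset.filter_congr
  intro p hp
  rw [h p hp]

private lemma wIn_eq {n : ℕ} (S : Finset (Fin n × Fin n)) (x : Fin n × Fin n → Bool) :
    wIn n S x = (∑ i : Fin n, rowCnt S x i * 2 ^ (i : ℕ)) +
      2 ^ n * ∑ j : Fin n, colCnt S x j * 2 ^ (j : ℕ) := by
  have hsplit : wIn n S x = ∑ p ∈ S.filter (fun p => x p = true),
      (2 ^ (p.1 : ℕ) + 2 ^ (n + (p.2 : ℕ))) := (Finset.sum_filter _ _).symm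
  rw [hsplit, Finset.sum_add_distrib]
  congr 1
  · rw [← Finset.sum_fiberwise (S.filter (fun p => x p = true)) (fun p => p.1)
      (fun p => 2 ^ (p.1 : ℕ))]
    apply Finset.sum_congr rfl
    intro i _
    rw [Finset.filter_filter]
    have : ∀ p ∈ S.filter (fun p => x p = true ∧ p.1 = i),
        2 ^ ((p.1 : Fin n) : ℕ) = 2 ^ (i : ℕ) := by
      intro p hp
      simp only [Finset.mem_filter] at hp
      rw [hp.2.2]
    rw [Finset.sum_congr rfl this, Finset.sum_const, smul_eq_mul, rowCnt]
  · rw [Finset.mul_sum, ← Finset.sum_fiberwise (S.filter (fun p => x p = true)) (fun p => p.2)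
      (fun p => 2 ^ (n + (p.2 : ℕ)))]
    apply Finset.sum_congr rfl
    intro j _
    rw [Finset.filter_filter]
    have : ∀ p ∈ S.filter (fun p => x p = true ∧ p.2 = j),
        2 ^ (n + ((p.2 : Fin n) : ℕ)) = 2 ^ (n + (j : ℕ)) := by
      intro p hp
      simp only [Finset.mem_filter] at hp
      rw [hp.2.2]
    rw [Finset.sum_congr rfl this, Finset.sum_const, smul_eq_mul, colCnt, pow_add]
    ring

private lemma exun_row_iff {n : ℕ} (x : Fin n × Fin n → Bool) (i : Fin n) :
    (∃! j : Fin n, x (i, j) = true) ↔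
      (Finset.univ.filter (fun p : Fin n × Fin n => x p = true ∧ p.1 = i)).card = 1 := by
  rw [Finset.card_eq_one]
  constructor
  · rintro ⟨j0, hj0, huniq⟩
    refine ⟨(i, j0), ?_⟩
    ext ⟨p1, p2⟩
    simp only [Finset.mem_filter, Finset.mem_univ, true_and, Finset.mem_singleton,
      Prod.mk.injEq]
    constructor
    · rintro ⟨hx, rfl⟩
      exact ⟨rfl, huniq p2 hx⟩
    · rintro ⟨rfl, rfl⟩
      exact ⟨hj0, rfl⟩
  · rintro ⟨a, ha⟩
    have hmem : a ∈ Finset.univ.filter (fun p : Fin n × Fin n => x p = true ∧ p.1 = i) := by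
      rw [ha]; exact Finset.mem_singleton_self a
    simp only [Finset.mem_filter, Finset.mem_univ, true_and] at hmem
    refine ⟨a.2, ?_, ?_⟩
    · rw [← hmem.2]; exact hmem.1
    · intro j hj
      have : (i, j) ∈ Finset.univ.filter (fun p : Fin n × Fin n => x p = true ∧ p.1 = i) := by
        simp [hj]
      rw [ha, Finset.mem_singleton] at this
      rw [← this]

private lemma exun_col_iff {n : ℕ} (x : Fin n × Fin n → Bool) (j : Fin n) :
    (∃! i : Fin n, x (i, j) = true) ↔
      (Finset.univ.filter (fun p : Fin n × Fin n => x p = true ∧ p.2 = j)).card = 1 := by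
  rw [Finset.card_eq_one]
  constructor
  · rintro ⟨i0, hi0, huniq⟩
    refine ⟨(i0, j), ?_⟩
    ext ⟨p1, p2⟩
    simp only [Finset.mem_filter, Finset.mem_univ, true_and, Finset.mem_singleton,
      Prod.mk.injEq]
    constructor
    · rintro ⟨hx, rfl⟩
      exact ⟨huniq p1 hx, rfl⟩
    · rintro ⟨rfl, rfl⟩
      exact ⟨hi0, rfl⟩
  · rintro ⟨a, ha⟩
    have hmem : a ∈ Finset.univ.filter (fun p : Fin n × Fin n => x p = true ∧ p.2 = j) := by
      rw [ha]; exact Finset.mem_singleton_self a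
    simp only [Finset.mem_filter, Finset.mem_univ, true_and] at hmem
    refine ⟨a.1, ?_, ?_⟩
    · rw [← hmem.2]; exact hmem.1
    · intro i hi
      have : (i, j) ∈ Finset.univ.filter (fun p : Fin n × Fin n => x p = true ∧ p.2 = j) := by
        simp [hi]
      rw [ha, Finset.mem_singleton] at this
      rw [← this]

private lemma rowCnt_le_one {n : ℕ} (S : Finset (Fin n × Fin n)) {y : Fin n × Fin n → Bool}
    (hy : IsMaximalMatching n y) (i : Fin n) : rowCnt S y i ≤ 1 := by
  have h1 := (exun_row_iff y i).mp (hy.1 i)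
  calc rowCnt S y i ≤ (Finset.univ.filter
      (fun p : Fin n × Fin n => y p = true ∧ p.1 = i)).card :=
    Finset.card_le_card (Finset.filter_subset_filter _ (Finset.subset_univ S))
  _ = 1 := h1

private lemma colCnt_le_one {n : ℕ} (S : Finset (Fin n × Fin n)) {y : Fin n × Fin n → Bool}
    (hy : IsMaximalMatching n y) (j : Fin n) : colCnt S y j ≤ 1 := by
  have h1 := (exun_col_iff y j).mp (hy.2 j)
  calc colCnt S y j ≤ (Finset.univ.filter
      (fun p : Fin n × Fin n => y p = true ∧ p.2 = j)).card :=
    Finset.card_le_card (Finset.filter_subset_filter _ (Finset.subset_univ S))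
  _ = 1 := h1

private lemma fin_sum_to_range {n : ℕ} (c : Fin n → ℕ) :
    (∑ i : Fin n, c i * 2 ^ (i : ℕ)) =
      ∑ k ∈ Finset.range n, (if h : k < n then c ⟨k, h⟩ else 0) * 2 ^ k := by
  rw [← Fin.sum_univ_eq_sum_range (fun k => (if h : k < n then c ⟨k, h⟩ else 0) * 2 ^ k) n]
  exact Finset.sum_congr rfl fun i _ => by simp [i.isLt]

theorem stmt9 (n : ℕ) (hn : 1 ≤ n) (X1 X2 : Finset (Fin n × Fin n))
    (r : (Fin n × Fin n → Bool) → Bool)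
    (hr : IsRectangle X1 X2 r)
    (hmodels : ∀ x, r x = true → pbWeight n x = 2 ^ (2 * n) - 1) :
    ∃ rhat : (Fin n × Fin n → Bool) → Bool, IsRectangle X1 X2 rhat ∧
      ∀ x, rhat x = true ↔ (r x = true ∧ IsMaximalMatching n x) := by
  classical
  obtain ⟨hun, hint, ρ1, ρ2, h1, h2, hre⟩ := hr
  have hdisj : Disjoint X1 X2 := Finset.disjoint_iff_inter_eq_empty.mpr hint
  have hpb : ∀ x, pbWeight n x = wIn n X1 x + wIn n X2 x := by
    intro x
    unfold pbWeight wIn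
    rw [← hun, Finset.sum_union hdisj]
  -- mixing two models of r gives a model
  have hmix : ∀ u v, r u = true → r v = true →
      wIn n X1 u + wIn n X2 v = 2 ^ (2 * n) - 1 := by
    intro u v hu hv
    set w : Fin n × Fin n → Bool := fun p => if p ∈ X1 then u p else v p with hw
    have hwu : ∀ p ∈ X1, w p = u p := fun p hp => if_pos hp
    have hwv : ∀ p ∈ X2, w p = v p := by
      intro p hp
      have hnp : p ∉ X1 := by
        intro h'
        have : p ∈ X1 ∩ X2 := Finset.mem_inter.mpr ⟨h', hp⟩
        rw [hint] at this
        exact absurd this (Finset.notMem_empty p)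
      exact if_neg hnp
    have hu' : ρ1 u = true ∧ ρ2 u = true := by
      have := hre u; rw [hu] at this
      exact Bool.and_eq_true _ _ |>.mp this.symm
    have hv' : ρ1 v = true ∧ ρ2 v = true := by
      have := hre v; rw [hv] at this
      exact Bool.and_eq_true _ _ |>.mp this.symm
    have hrw : r w = true := by
      rw [hre, h1 w u hwu, h2 w v hwv, hu'.1, hv'.2]
      rfl
    have := hmodels w hrw
    rw [hpb w, wIn_congr hwu, wIn_congr hwv] at this
    exact this
  -- two matching models of r have the same restricted counts on X2
  have key : ∀ y z, r y = true → r z = true → IsMaximalMatching n y → IsMaximalMatching n z →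
      (∀ i, rowCnt X2 y i = rowCnt X2 z i) ∧ (∀ j, colCnt X2 y j = colCnt X2 z j) := by
    intro y z hry hrz hmy hmz
    have e1 := hmix y y hry hry
    have e2 := hmix y z hry hrz
    have ew : wIn n X2 y = wIn n X2 z := by omega
    rw [wIn_eq, wIn_eq] at ew
    have hboundA : ∀ (u : Fin n × Fin n → Bool), IsMaximalMatching n u →
        (∑ i : Fin n, rowCnt X2 u i * 2 ^ (i : ℕ)) < 2 ^ n := by
      intro u hu
      have hle : (∑ i : Fin n, rowCnt X2 u i * 2 ^ (i : ℕ)) ≤ ∑ i : Fin n, 2 ^ (i : ℕ) :=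
        Finset.sum_le_sum fun i _ => by
          have := rowCnt_le_one X2 hu i
          calc rowCnt X2 u i * 2 ^ (i : ℕ) ≤ 1 * 2 ^ (i : ℕ) :=
            Nat.mul_le_mul_right _ this
          _ = 2 ^ (i : ℕ) := one_mul _
      have heq : (∑ i : Fin n, 2 ^ (i : ℕ)) = 2 ^ n - 1 := by
        rw [Fin.sum_univ_eq_sum_range (fun k => 2 ^ k) n, sum_two_pow']
      have : 1 ≤ 2 ^ n := Nat.one_le_two_pow
      omega
    obtain ⟨eA, eD⟩ := add_pow_cancel ew (hboundA y hmy) (hboundA z hmz)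
    constructor
    · intro i
      rw [fin_sum_to_range, fin_sum_to_range] at eA
      have := bin_unique n _ _
        (fun k => by
          split
          · exact rowCnt_le_one X2 hmy _
          · exact Nat.zero_le 1)
        (fun k => by
          split
          · exact rowCnt_le_one X2 hmz _
          · exact Nat.zero_le 1)
        eA (i : ℕ) i.isLt
      simpa [i.isLt] using this
    · intro j
      rw [fin_sum_to_range, fin_sum_to_range] at eD
      have := bin_unique n _ _
        (fun k => by
          split
          · exact colCnt_le_one X2 hmy _
          · exact Nat.zero_le 1)
        (fun k => by
          split
          · exact colCnt_le_one X2 hmz _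
          · exact Nat.zero_le 1)
        eD (j : ℕ) j.isLt
      simpa [j.isLt] using this
  -- splitting total counts
  have hsplitR : ∀ (x : Fin n × Fin n → Bool) (i : Fin n),
      (Finset.univ.filter (fun p : Fin n × Fin n => x p = true ∧ p.1 = i)).card =
        rowCnt X1 x i + rowCnt X2 x i := by
    intro x i
    rw [← hun, Finset.filter_union, Finset.card_union_of_disjoint
      (Finset.disjoint_filter_filter hdisj)]
    rfl
  have hsplitC : ∀ (x : Fin n × Fin n → Bool) (j : Fin n),
      (Finset.univ.filter (fun p : Fin n × Fin n => x p = true ∧ p.2 = j)).card =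
        colCnt X1 x j + colCnt X2 x j := by
    intro x j
    rw [← hun, Finset.filter_union, Finset.card_union_of_disjoint
      (Finset.disjoint_filter_filter hdisj)]
    rfl
  -- the new rectangle
  set P1 : (Fin n × Fin n → Bool) → Prop := fun x =>
    ∃ y, r y = true ∧ IsMaximalMatching n y ∧ ∀ p ∈ X1, y p = x p with hP1
  set P2 : (Fin n × Fin n → Bool) → Prop := fun x =>
    ∃ y, r y = true ∧ IsMaximalMatching n y ∧ ∀ p ∈ X2, y p = x p with hP2
  refine ⟨fun x => (ρ1 x && @decide (P1 x) (Classical.propDecidable _)) && (ρ2 x && @decide (P2 x) (Classical.propDecidable _)),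
    ⟨hun, hint, fun x => ρ1 x && @decide (P1 x) (Classical.propDecidable _), fun x => ρ2 x && @decide (P2 x) (Classical.propDecidable _), ?_, ?_,
      fun x => rfl⟩, ?_⟩
  · intro x y hxy
    show (ρ1 x && @decide (P1 x) (Classical.propDecidable _)) = (ρ1 y && @decide (P1 y) (Classical.propDecidable _))
    rw [h1 x y hxy]
    congr 1
    simp only [decide_eq_decide, hP1]
    constructor
    · rintro ⟨w, hw1, hw2, hw3⟩
      exact ⟨w, hw1, hw2, fun p hp => (hw3 p hp).trans (hxy p hp)⟩
    · rintro ⟨w, hw1, hw2, hw3⟩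
      exact ⟨w, hw1, hw2, fun p hp => (hw3 p hp).trans (hxy p hp).symm⟩
  · intro x y hxy
    show (ρ2 x && @decide (P2 x) (Classical.propDecidable _)) = (ρ2 y && @decide (P2 y) (Classical.propDecidable _))
    rw [h2 x y hxy]
    congr 1
    simp only [decide_eq_decide, hP2]
    constructor
    · rintro ⟨w, hw1, hw2, hw3⟩
      exact ⟨w, hw1, hw2, fun p hp => (hw3 p hp).trans (hxy p hp)⟩
    · rintro ⟨w, hw1, hw2, hw3⟩
      exact ⟨w, hw1, hw2, fun p hp => (hw3 p hp).trans (hxy p hp).symm⟩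
  · intro x
    simp only [Bool.and_eq_true, decide_eq_true_eq]
    constructor
    · rintro ⟨⟨hρ1, hp1⟩, hρ2, hp2⟩
      have hrx : r x = true := by rw [hre, hρ1, hρ2]; rfl
      obtain ⟨y, hry, hmy, hyx⟩ := hp1
      obtain ⟨z, hrz, hmz, hzx⟩ := hp2
      have hkey := key y z hry hrz hmy hmz
      refine ⟨hrx, ?_, ?_⟩
      · intro i
        rw [exun_row_iff, hsplitR x i]
        have e1 : rowCnt X1 x i = rowCnt X1 y i := (rowCnt_congr hyx i).symm
        have e2 : rowCnt X2 x i = rowCnt X2 z i := (rowCnt_congr hzx i).symm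
        rw [e1, e2, ← hkey.1 i, ← hsplitR y i]
        exact (exun_row_iff y i).mp (hmy.1 i)
      · intro j
        rw [exun_col_iff, hsplitC x j]
        have e1 : colCnt X1 x j = colCnt X1 y j := (colCnt_congr hyx j).symm
        have e2 : colCnt X2 x j = colCnt X2 z j := (colCnt_congr hzx j).symm
        rw [e1, e2, ← hkey.2 j, ← hsplitC y j]
        exact (exun_col_iff y j).mp (hmy.2 j)
    · rintro ⟨hrx, hm⟩
      have hρ : ρ1 x = true ∧ ρ2 x = true := by
        have := hre x; rw [hrx] at this
        exact Bool.and_eq_true _ _ |>.mp this.symm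
      exact ⟨⟨hρ.1, ⟨x, hrx, hm, fun p _ => rfl⟩⟩, hρ.2, ⟨x, hrx, hm, fun p _ => rfl⟩⟩
end

section
/- Let r = ρ1 ∧ ρ2 be a satisfiable rectangle with respect to a partition (X1, X2) of X_n such that every model of r is a maximal matching assignment. Define U1 = {i : some model of ρ1 sets some variable x_{i,j} ∈ X1 to 1}, V1 = {j : some model of ρ1 sets some variable x_{i,j} ∈ X1 to 1}, and define U2 and V2 analogously from ρ2 and X2. Then U1 ∩ U2 = ∅, V1 ∩ V2 = ∅, U1 ∪ U2 = {1,…,n}, V1 ∪ V2 = {1,…,n}, and |U1| = |V1| (hence also |U2| = |V2| = n − |U1|). -/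
theorem stmt12 (n : ℕ) (hn : 1 ≤ n) (X1 X2 : Finset (Fin n × Fin n))
    (hunion : X1 ∪ X2 = Finset.univ) (hinter : X1 ∩ X2 = ∅)
    (ρ1 ρ2 r : (Fin n × Fin n → Bool) → Bool)
    (hρ1 : DependsOnlyOn X1 ρ1) (hρ2 : DependsOnlyOn X2 ρ2)
    (hrdef : ∀ x, r x = (ρ1 x && ρ2 x))
    (hsat : ∃ x, r x = true)
    (hmodels : ∀ x, r x = true → IsMaximalMatching n x)
    (U1 V1 U2 V2 : Set (Fin n))
    (hU1 : U1 = {i | ∃ j, (i, j) ∈ X1 ∧ ∃ x, ρ1 x = true ∧ x (i, j) = true})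
    (hV1 : V1 = {j | ∃ i, (i, j) ∈ X1 ∧ ∃ x, ρ1 x = true ∧ x (i, j) = true})
    (hU2 : U2 = {i | ∃ j, (i, j) ∈ X2 ∧ ∃ x, ρ2 x = true ∧ x (i, j) = true})
    (hV2 : V2 = {j | ∃ i, (i, j) ∈ X2 ∧ ∃ x, ρ2 x = true ∧ x (i, j) = true}) :
    U1 ∩ U2 = ∅ ∧ V1 ∩ V2 = ∅ ∧
    U1 ∪ U2 = Set.univ ∧ V1 ∪ V2 = Set.univ ∧
    U1.ncard = V1.ncard ∧ U2.ncard = V2.ncard ∧ U2.ncard = n - U1.ncard := by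
  classical
  obtain ⟨x0, hx0⟩ := hsat
  have hsplit : ∀ x, r x = true → ρ1 x = true ∧ ρ2 x = true := by
    intro x hx
    have := (hrdef x).symm.trans hx
    simpa using this
  have hρ1x0 : ρ1 x0 = true := (hsplit x0 hx0).1
  have hρ2x0 : ρ2 x0 = true := (hsplit x0 hx0).2
  have notinboth : ∀ v : Fin n × Fin n, v ∈ X1 → v ∈ X2 → False := by
    intro v h1 h2
    have : v ∈ X1 ∩ X2 := Finset.mem_inter.mpr ⟨h1, h2⟩
    simp [hinter] at this
  have memor : ∀ v : Fin n × Fin n, v ∈ X1 ∨ v ∈ X2 := by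
    intro v
    have : v ∈ X1 ∪ X2 := by rw [hunion]; exact Finset.mem_univ v
    exact Finset.mem_union.mp this
  set comb : (Fin n × Fin n → Bool) → (Fin n × Fin n → Bool) → (Fin n × Fin n → Bool) :=
    fun y z v => if v ∈ X1 then y v else z v with hcombdef
  have hcombX1 : ∀ y z, ∀ v ∈ X1, comb y z v = y v := by
    intro y z v hv; simp [hcombdef, hv]
  have hcombX2 : ∀ y z, ∀ v ∈ X2, comb y z v = z v := by
    intro y z v hv
    have hv1 : v ∉ X1 := fun h => notinboth v h hv
    simp [hcombdef, hv1]
  have hcombr : ∀ y z, ρ1 y = true → ρ2 z = true → r (comb y z) = true := by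
    intro y z hy hz
    have h1 : ρ1 (comb y z) = ρ1 y := hρ1 _ _ (fun v hv => hcombX1 y z v hv)
    have h2 : ρ2 (comb y z) = ρ2 z := hρ2 _ _ (fun v hv => hcombX2 y z v hv)
    rw [hrdef, h1, h2, hy, hz]; rfl
  -- B1 : any model sends rows of U1 into X1
  have B1 : ∀ x, r x = true → ∀ i, i ∈ U1 → ∀ j, x (i, j) = true → (i, j) ∈ X1 := by
    intro x hx i hi j hj
    rcases memor (i, j) with h | h
    · exact h
    · exfalso
      rw [hU1] at hi
      obtain ⟨j', hij', y, hy, hyij'⟩ := hi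
      have hw : r (comb y x) = true := hcombr y x hy (hsplit x hx).2
      have hw1 : comb y x (i, j') = true := (hcombX1 y x (i, j') hij').trans hyij'
      have hw2 : comb y x (i, j) = true := (hcombX2 y x (i, j) h).trans hj
      obtain ⟨jj, _, huniq⟩ := (hmodels _ hw).1 i
      have hjj : j' = j := (huniq j' hw1).trans (huniq j hw2).symm
      exact notinboth (i, j) (hjj ▸ hij') h
  have B1' : ∀ x, r x = true → ∀ j, j ∈ V1 → ∀ i, x (i, j) = true → (i, j) ∈ X1 := by
    intro x hx j hj i hi
    rcases memor (i, j) with h | h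
    · exact h
    · exfalso
      rw [hV1] at hj
      obtain ⟨i', hij', y, hy, hyij'⟩ := hj
      have hw : r (comb y x) = true := hcombr y x hy (hsplit x hx).2
      have hw1 : comb y x (i', j) = true := (hcombX1 y x (i', j) hij').trans hyij'
      have hw2 : comb y x (i, j) = true := (hcombX2 y x (i, j) h).trans hi
      obtain ⟨ii, _, huniq⟩ := (hmodels _ hw).2 j
      have hii : i' = i := (huniq i' hw1).trans (huniq i hw2).symm
      exact notinboth (i, j) (hii ▸ hij') h
  have B2 : ∀ x, r x = true → ∀ i, i ∈ U2 → ∀ j, x (i, j) = true → (i, j) ∈ X2 := by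
    intro x hx i hi j hj
    rcases memor (i, j) with h | h
    swap
    · exact h
    · exfalso
      rw [hU2] at hi
      obtain ⟨j', hij', y, hy, hyij'⟩ := hi
      have hw : r (comb x y) = true := hcombr x y (hsplit x hx).1 hy
      have hw1 : comb x y (i, j') = true := (hcombX2 x y (i, j') hij').trans hyij'
      have hw2 : comb x y (i, j) = true := (hcombX1 x y (i, j) h).trans hj
      obtain ⟨jj, _, huniq⟩ := (hmodels _ hw).1 i
      have hjj : j' = j := (huniq j' hw1).trans (huniq j hw2).symm
      exact notinboth (i, j) h (hjj ▸ hij')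
  have B2' : ∀ x, r x = true → ∀ j, j ∈ V2 → ∀ i, x (i, j) = true → (i, j) ∈ X2 := by
    intro x hx j hj i hi
    rcases memor (i, j) with h | h
    swap
    · exact h
    · exfalso
      rw [hV2] at hj
      obtain ⟨i', hij', y, hy, hyij'⟩ := hj
      have hw : r (comb x y) = true := hcombr x y (hsplit x hx).1 hy
      have hw1 : comb x y (i', j) = true := (hcombX2 x y (i', j) hij').trans hyij'
      have hw2 : comb x y (i, j) = true := (hcombX1 x y (i, j) h).trans hi
      obtain ⟨ii, _, huniq⟩ := (hmodels _ hw).2 j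
      have hii : i' = i := (huniq i' hw1).trans (huniq i hw2).symm
      exact notinboth (i, j) h (hii ▸ hij')
  -- models providing witnesses for U2 / V2 membership
  have hU2model : ∀ i, i ∈ U2 → ∃ j x, r x = true ∧ x (i, j) = true ∧ (i, j) ∈ X2 := by
    intro i hi
    rw [hU2] at hi
    obtain ⟨j, hij, y, hy, hyij⟩ := hi
    exact ⟨j, comb x0 y, hcombr x0 y hρ1x0 hy, (hcombX2 x0 y (i, j) hij).trans hyij, hij⟩
  have hV2model : ∀ j, j ∈ V2 → ∃ i x, r x = true ∧ x (i, j) = true ∧ (i, j) ∈ X2 := by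
    intro j hj
    rw [hV2] at hj
    obtain ⟨i, hij, y, hy, hyij⟩ := hj
    exact ⟨i, comb x0 y, hcombr x0 y hρ1x0 hy, (hcombX2 x0 y (i, j) hij).trans hyij, hij⟩
  -- disjointness
  have hUdisj : U1 ∩ U2 = ∅ := by
    ext i
    simp only [Set.mem_inter_iff, Set.mem_empty_iff_false, iff_false]
    rintro ⟨h1, h2⟩
    obtain ⟨j, x, hx, hxij, hij2⟩ := hU2model i h2
    exact notinboth (i, j) (B1 x hx i h1 j hxij) hij2
  have hVdisj : V1 ∩ V2 = ∅ := by
    ext j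
    simp only [Set.mem_inter_iff, Set.mem_empty_iff_false, iff_false]
    rintro ⟨h1, h2⟩
    obtain ⟨i, x, hx, hxij, hij2⟩ := hV2model j h2
    exact notinboth (i, j) (B1' x hx j h1 i hxij) hij2
  -- unions
  have hUunion : U1 ∪ U2 = Set.univ := by
    ext i
    simp only [Set.mem_union, Set.mem_univ, iff_true]
    obtain ⟨j, hj, _⟩ := (hmodels x0 hx0).1 i
    rcases memor (i, j) with h | h
    · left; rw [hU1]; exact ⟨j, h, x0, hρ1x0, hj⟩
    · right; rw [hU2]; exact ⟨j, h, x0, hρ2x0, hj⟩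
  have hVunion : V1 ∪ V2 = Set.univ := by
    ext j
    simp only [Set.mem_union, Set.mem_univ, iff_true]
    obtain ⟨i, hi, _⟩ := (hmodels x0 hx0).2 j
    rcases memor (i, j) with h | h
    · left; rw [hV1]; exact ⟨i, h, x0, hρ1x0, hi⟩
    · right; rw [hV2]; exact ⟨i, h, x0, hρ2x0, hi⟩
  -- the permutation from x0
  have hrow := (hmodels x0 hx0).1
  have hcol := (hmodels x0 hx0).2
  set σ : Fin n → Fin n := fun i => (hrow i).choose with hσdef
  have hσ : ∀ i, x0 (i, σ i) = true := fun i => (hrow i).choose_spec.1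
  have hσu : ∀ i j, x0 (i, j) = true → j = σ i := fun i j h => (hrow i).choose_spec.2 j h
  have hσinj : Function.Injective σ := by
    intro i i' h
    obtain ⟨ii, _, huniq⟩ := hcol (σ i)
    have h1 := huniq i (hσ i)
    have h2 := huniq i' (h ▸ hσ i')
    exact h1.trans h2.symm
  have himg1 : σ '' U1 = V1 := by
    ext j
    constructor
    · rintro ⟨i, hi, rfl⟩
      have hmem := B1 x0 hx0 i hi (σ i) (hσ i)
      rw [hV1]; exact ⟨i, hmem, x0, hρ1x0, hσ i⟩
    · intro hj
      obtain ⟨i, hi, _⟩ := hcol j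
      have hmem := B1' x0 hx0 j hj i hi
      refine ⟨i, ?_, (hσu i j hi).symm⟩
      rw [hU1]; exact ⟨j, hmem, x0, hρ1x0, hi⟩
  have himg2 : σ '' U2 = V2 := by
    ext j
    constructor
    · rintro ⟨i, hi, rfl⟩
      have hmem := B2 x0 hx0 i hi (σ i) (hσ i)
      rw [hV2]; exact ⟨i, hmem, x0, hρ2x0, hσ i⟩
    · intro hj
      obtain ⟨i, hi, _⟩ := hcol j
      have hmem := B2' x0 hx0 j hj i hi
      refine ⟨i, ?_, (hσu i j hi).symm⟩
      rw [hU2]; exact ⟨j, hmem, x0, hρ2x0, hi⟩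
  have hcard1 : U1.ncard = V1.ncard := by
    rw [← himg1, Set.ncard_image_of_injective U1 hσinj]
  have hcard2 : U2.ncard = V2.ncard := by
    rw [← himg2, Set.ncard_image_of_injective U2 hσinj]
  have hsum : U1.ncard + U2.ncard = n := by
    rw [← Set.ncard_union_eq (Set.disjoint_iff_inter_eq_empty.mpr hUdisj)
      (Set.toFinite U1) (Set.toFinite U2), hUunion, Set.ncard_univ]
    simp
  exact ⟨hUdisj, hVdisj, hUunion, hVunion, hcard1, hcard2, by omega⟩
end

section
/- Let r = ρ1 ∧ ρ2 be a satisfiable rectangle with respect to a partition (X1, X2) of X_n such that every model of r is a maximal matching assignment, and let U1 = {i : some model of ρ1 sets some variable x_{i,j} ∈ X1 to 1}. Then the number of models of r satisfies |r⁻¹(1)| ≤ |U1|! · (n − |U1|)!. -/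
open Classical in
/-- For a permutation-matrix assignment `z`, the column of the unique `1` in row `i`. -/
noncomputable def rowOf {n : ℕ} (z : Fin n × Fin n → Bool) (i : Fin n) : Fin n :=
  if h : ∃ j, z (i, j) = true then h.choose else i

lemma rowOf_eq {n : ℕ} {z : Fin n × Fin n → Bool} {i : Fin n}
    (h : ∃! j, z (i, j) = true) : z (i, rowOf z i) = true := by
  classical
  unfold rowOf
  rw [dif_pos h.exists]
  exact h.exists.choose_spec

lemma rowOf_uniq {n : ℕ} {z : Fin n × Fin n → Bool} {i j : Fin n}
    (h : ∃! j, z (i, j) = true) (hj : z (i, j) = true) : j = rowOf z i :=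
  h.unique hj (rowOf_eq h)

theorem stmt13 (n : ℕ) (hn : 1 ≤ n) (X1 X2 : Finset (Fin n × Fin n))
    (hunion : X1 ∪ X2 = Finset.univ) (hinter : X1 ∩ X2 = ∅)
    (ρ1 ρ2 r : (Fin n × Fin n → Bool) → Bool)
    (hρ1 : DependsOnlyOn X1 ρ1) (hρ2 : DependsOnlyOn X2 ρ2)
    (hrdef : ∀ x, r x = (ρ1 x && ρ2 x))
    (hsat : ∃ x, r x = true)
    (hmodels : ∀ x, r x = true → IsMaximalMatching n x)
    (U1 : Set (Fin n))
    (hU1 : U1 = {i | ∃ j, (i, j) ∈ X1 ∧ ∃ x, ρ1 x = true ∧ x (i, j) = true}) :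
    ({x | r x = true} : Set (Fin n × Fin n → Bool)).ncard ≤
      Nat.factorial U1.ncard * Nat.factorial (n - U1.ncard) := by
  classical
  set V1 : Set (Fin n) := {j | ∃ i, (i, j) ∈ X1 ∧ ∃ x, ρ1 x = true ∧ x (i, j) = true}
    with hV1def
  -- basic facts about the partition
  have hdisj : ∀ v : Fin n × Fin n, v ∈ X1 → v ∈ X2 → False := by
    intro v h1 h2
    have hv : v ∈ X1 ∩ X2 := Finset.mem_inter.mpr ⟨h1, h2⟩
    rw [hinter] at hv
    exact absurd hv (Finset.notMem_empty v)
  -- mixing lemma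
  have hmix : ∀ x y, ρ1 x = true → ρ2 y = true →
      r (fun v => if v ∈ X1 then x v else y v) = true := by
    intro x y h1 h2
    rw [hrdef]
    have e1 : ρ1 (fun v => if v ∈ X1 then x v else y v) = ρ1 x := by
      apply hρ1; intro v hv; simp [hv]
    have e2 : ρ2 (fun v => if v ∈ X1 then x v else y v) = ρ2 y := by
      apply hρ2; intro v hv
      have hnv : v ∉ X1 := fun hv1 => hdisj v hv1 hv
      simp [hnv]
    rw [e1, e2, h1, h2]; rfl
  have hρ1m : ∀ z, r z = true → ρ1 z = true := by
    intro z hz; rw [hrdef] at hz; exact (Bool.and_eq_true _ _ |>.mp hz).1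
  have hρ2m : ∀ z, r z = true → ρ2 z = true := by
    intro z hz; rw [hrdef] at hz; exact (Bool.and_eq_true _ _ |>.mp hz).2
  have hrow : ∀ z, r z = true → ∀ i, z (i, rowOf z i) = true := fun z hz i =>
    rowOf_eq ((hmodels z hz).1 i)
  have hrowu : ∀ z, r z = true → ∀ i j, z (i, j) = true → j = rowOf z i := fun z hz i j h =>
    rowOf_uniq ((hmodels z hz).1 i) h
  have hcolu : ∀ z, r z = true → ∀ j i i', z (i, j) = true → z (i', j) = true → i = i' :=
    fun z hz j i i' h h' => ((hmodels z hz).2 j).unique h h'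
  have hcole : ∀ z, r z = true → ∀ j, ∃ i, z (i, j) = true := fun z hz j =>
    ((hmodels z hz).2 j).exists
  -- key lemma A: for a model z, rows in U1 place their 1 on an X1-variable
  have keyA : ∀ z, r z = true → ∀ i, i ∈ U1 → (i, rowOf z i) ∈ X1 := by
    intro z hz i hi
    rw [hU1] at hi
    obtain ⟨j, hjX, x, hx1, hxv⟩ := hi
    by_contra hnot
    set w : Fin n × Fin n → Bool := fun v => if v ∈ X1 then x v else z v with hw
    have hwr : r w = true := hmix x z hx1 (hρ2m z hz)
    have hw1 : w (i, j) = true := by rw [hw]; simp only [if_pos hjX]; exact hxv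
    have hw2 : w (i, rowOf z i) = true := by
      rw [hw]; simp only [if_neg hnot]; exact hrow z hz i
    have hne : j ≠ rowOf z i := fun he => hnot (he ▸ hjX)
    exact hne ((hrowu w hwr i j hw1).trans (hrowu w hwr i _ hw2).symm)
  have keyA' : ∀ z, r z = true → ∀ i, (i, rowOf z i) ∈ X1 → i ∈ U1 := by
    intro z hz i h
    rw [hU1]
    exact ⟨rowOf z i, h, z, hρ1m z hz, hrow z hz i⟩
  have keyB : ∀ z, r z = true → ∀ i, (i, rowOf z i) ∈ X1 → rowOf z i ∈ V1 := by
    intro z hz i h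
    exact ⟨i, h, z, hρ1m z hz, hrow z hz i⟩
  have keyB' : ∀ z, r z = true → ∀ i, rowOf z i ∈ V1 → (i, rowOf z i) ∈ X1 := by
    intro z hz i hv
    obtain ⟨i', hi'X, x, hx1, hxv⟩ := hv
    by_contra hnot
    set w : Fin n × Fin n → Bool := fun v => if v ∈ X1 then x v else z v with hw
    have hwr : r w = true := hmix x z hx1 (hρ2m z hz)
    have hw1 : w (i', rowOf z i) = true := by rw [hw]; simp only [if_pos hi'X]; exact hxv
    have hw2 : w (i, rowOf z i) = true := by
      rw [hw]; simp only [if_neg hnot]; exact hrow z hz i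
    have hne : i' ≠ i := fun he => hnot (he ▸ hi'X)
    exact hne (hcolu w hwr (rowOf z i) i' i hw1 hw2)
  have hiff : ∀ z, r z = true → ∀ i, (i ∈ U1 ↔ rowOf z i ∈ V1) := by
    intro z hz i
    constructor
    · intro h; exact keyB z hz i (keyA z hz i h)
    · intro h; exact keyA' z hz i (keyB' z hz i h)
  -- injectivity of rowOf for models
  have finj : ∀ z, r z = true → Function.Injective (rowOf z) := by
    intro z hz i i' h
    exact hcolu z hz (rowOf z i) i i' (hrow z hz i) (h ▸ hrow z hz i')
  -- a model is determined by rowOf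
  have fdet : ∀ z z', r z = true → r z' = true → rowOf z = rowOf z' → z = z' := by
    intro z z' hz hz' hff
    funext v
    obtain ⟨i, j⟩ := v
    have h1 : z (i, j) = true ↔ j = rowOf z i :=
      ⟨hrowu z hz i j, fun h => h ▸ hrow z hz i⟩
    have h2 : z' (i, j) = true ↔ j = rowOf z' i :=
      ⟨hrowu z' hz' i j, fun h => h ▸ hrow z' hz' i⟩
    rw [Bool.eq_iff_iff, h1, h2, hff]
  -- the bijections on U1 and its complement
  have hbij1 : ∀ z (hz : r z = true), Function.Bijective
      (fun p : ↥U1 => (⟨rowOf z p.1, (hiff z hz p.1).mp p.2⟩ : ↥V1)) := by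
    intro z hz
    constructor
    · intro a b h
      exact Subtype.ext (finj z hz (congrArg Subtype.val h))
    · rintro ⟨j, hj⟩
      obtain ⟨i, hi⟩ := hcole z hz j
      have hfi : rowOf z i = j := (hrowu z hz i j hi).symm
      have hiU : i ∈ U1 := (hiff z hz i).mpr (by rw [hfi]; exact hj)
      exact ⟨⟨i, hiU⟩, Subtype.ext hfi⟩
  have hiffc : ∀ z, r z = true → ∀ i : Fin n, (i ∈ U1ᶜ ↔ rowOf z i ∈ V1ᶜ) := by
    intro z hz i
    simp only [Set.mem_compl_iff]
    exact not_congr (hiff z hz i)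
  have hbij2 : ∀ z (hz : r z = true), Function.Bijective
      (fun p : ↥(U1ᶜ) => (⟨rowOf z p.1, (hiffc z hz p.1).mp p.2⟩ : ↥(V1ᶜ))) := by
    intro z hz
    constructor
    · intro a b h
      exact Subtype.ext (finj z hz (congrArg Subtype.val h))
    · rintro ⟨j, hj⟩
      obtain ⟨i, hi⟩ := hcole z hz j
      have hfi : rowOf z i = j := (hrowu z hz i j hi).symm
      have hiU : i ∈ U1ᶜ := (hiffc z hz i).mpr (by rw [hfi]; exact hj)
      exact ⟨⟨i, hiU⟩, Subtype.ext hfi⟩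
  obtain ⟨z0, hz0⟩ := hsat
  let e1 : ↥U1 ≃ ↥V1 := Equiv.ofBijective _ (hbij1 z0 hz0)
  let e2 : ↥(U1ᶜ) ≃ ↥(V1ᶜ) := Equiv.ofBijective _ (hbij2 z0 hz0)
  set M : Set (Fin n × Fin n → Bool) := {x | r x = true} with hM
  have hMem : ∀ z : ↥M, r z.1 = true := fun z => z.2
  let Φ : ↥M → (↥U1 ≃ ↥V1) × (↥(U1ᶜ) ≃ ↥(V1ᶜ)) := fun z =>
    (Equiv.ofBijective _ (hbij1 z.1 (hMem z)), Equiv.ofBijective _ (hbij2 z.1 (hMem z)))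
  have hΦinj : Function.Injective Φ := by
    intro z z' h
    have h1 := congrArg Prod.fst h
    have h2 := congrArg Prod.snd h
    apply Subtype.ext
    apply fdet z.1 z'.1 (hMem z) (hMem z')
    funext i
    by_cases hi : i ∈ U1
    · have := congrArg (fun e => ((e : ↥U1 ≃ ↥V1) ⟨i, hi⟩ : ↥V1).1) h1
      simpa [Φ, Equiv.ofBijective] using this
    · have := congrArg (fun e => ((e : ↥(U1ᶜ) ≃ ↥(V1ᶜ)) ⟨i, hi⟩ : ↥(V1ᶜ)).1) h2
      simpa [Φ, Equiv.ofBijective] using this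
  have hcardU : Fintype.card ↥U1 = U1.ncard := by
    rw [← Nat.card_coe_set_eq, Nat.card_eq_fintype_card]
  have hcardUc : Fintype.card ↥(U1ᶜ) = n - U1.ncard := by
    rw [Fintype.card_compl_set, Fintype.card_fin, hcardU]
  calc M.ncard = Nat.card ↥M := (Nat.card_coe_set_eq M).symm
    _ = Fintype.card ↥M := Nat.card_eq_fintype_card
    _ ≤ Fintype.card ((↥U1 ≃ ↥V1) × (↥(U1ᶜ) ≃ ↥(V1ᶜ))) :=
        Fintype.card_le_of_injective Φ hΦinj
    _ = Fintype.card (↥U1 ≃ ↥V1) * Fintype.card (↥(U1ᶜ) ≃ ↥(V1ᶜ)) := Fintype.card_prod _ _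
    _ = Nat.factorial (Fintype.card ↥U1) * Nat.factorial (Fintype.card ↥(U1ᶜ)) := by
        rw [Fintype.card_equiv e1, Fintype.card_equiv e2]
    _ = Nat.factorial U1.ncard * Nat.factorial (n - U1.ncard) := by
        rw [hcardU, hcardUc]
end
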